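/- arXiv:math/0410504 — 2 statements merged into one kernel-verified Lean document; each statement's English description precedes it below -/
import Mathlib

section
/- Let P be a periodic Borel automorphism of an uncountable standard Borel space (X, 𝓑). Then there exists a map f : [0,1] → Aut(X, 𝓑) such that f(0) = id, f(1) = P, for every t ∈ [0,1] and every x ∈ X one has f(t)x ∈ {x, Px} (in particular each f(t) is periodic and lies in the full group [P]), and f is continuous against all non-atomic measures: for every non-atomic Borel probability measure μ on X and every t₀ ∈ [0,1], μ(E(f(t), f(t₀))) → 0 as t → t₀. -/
open MeasureTheory Set
open scoped ENNReal

private lemma pow_mul_fixed {X : Type*} (P : Equiv.Perm X) {x : X} {n : ℕ}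
    (h : (P ^ n) x = x) (q : ℕ) : (P ^ (n * q)) x = x := by
  induction q with
  | zero => simp
  | succ q ih => rw [Nat.mul_succ, pow_add, Equiv.Perm.mul_apply, h, ih]

private lemma pow_mod_apply {X : Type*} (P : Equiv.Perm X) {x : X} {n : ℕ}
    (h : (P ^ n) x = x) (m : ℕ) : (P ^ m) x = (P ^ (m % n)) x := by
  conv_lhs => rw [← Nat.mod_add_div m n]
  rw [pow_add, Equiv.Perm.mul_apply, pow_mul_fixed P h _]

/-- `T` is a Borel automorphism: both `T` and its inverse are measurable. -/
def IsBorelAuto {X : Type*} [MeasurableSpace X] (T : Equiv.Perm X) : Prop :=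
  Measurable T ∧ Measurable T.symm

/-- `T` is periodic: every point is periodic. -/
def IsPeriodicAuto {X : Type*} (T : Equiv.Perm X) : Prop :=
  ∀ x : X, ∃ n : ℕ, 1 ≤ n ∧ (T ^ n) x = x

/-- The set on which `S` and `T` (or their inverses) differ. -/
def Eset {X : Type*} (S T : Equiv.Perm X) : Set X :=
  {x | S x ≠ T x} ∪ {x | S⁻¹ x ≠ T⁻¹ x}

/-- a periodic automorphism is connected to the identity by a
path lying in its full group, continuous against all non-atomic measures. -/
theorem periodic_path_connected {X : Type*} [MeasurableSpace X]
    [StandardBorelSpace X] [Uncountable X]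
    (P : Equiv.Perm X) (hP : IsBorelAuto P) (hPper : IsPeriodicAuto P) :
    ∃ f : Set.Icc (0 : ℝ) 1 → Equiv.Perm X,
      (∀ t, IsBorelAuto (f t)) ∧
      f ⟨0, by norm_num⟩ = 1 ∧ f ⟨1, by norm_num⟩ = P ∧
      (∀ t (x : X), f t x = x ∨ f t x = P x) ∧
      ∀ (μ : Measure X), IsProbabilityMeasure μ → (∀ x : X, μ {x} = 0) →
        ∀ t₀ : Set.Icc (0 : ℝ) 1,
          Filter.Tendsto (fun t => μ (Eset (f t) (f t₀))) (nhds t₀) (nhds 0) := by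
  classical
  obtain ⟨ψ, hψ⟩ := exists_measurableEmbedding_real X
  set q : ℝ → ℝ := fun r => Real.arctan r / Real.pi + 1/2 with hqdef
  have hpi : (0:ℝ) < Real.pi := Real.pi_pos
  have hq0 : ∀ r, 0 < q r := by
    intro r
    have h1 : -(Real.pi/2) < Real.arctan r := Real.neg_pi_div_two_lt_arctan r
    have h2 : -(1/2 : ℝ) < Real.arctan r / Real.pi := by
      rw [neg_lt, ← neg_div, div_lt_iff₀ hpi]; linarith
    simp only [hqdef]; linarith
  have hq1 : ∀ r, q r < 1 := by
    intro r
    have h1 : Real.arctan r < Real.pi/2 := Real.arctan_lt_pi_div_two r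
    have h2 : Real.arctan r / Real.pi < 1/2 := by
      rw [div_lt_iff₀ hpi]; linarith
    simp only [hqdef]; linarith
  have hqinj : Function.Injective q := by
    intro a b hab
    simp only [hqdef] at hab
    exact Real.arctan_injective (by field_simp at hab; linarith)
  have hqcont : Continuous q := by
    simp only [hqdef]
    exact (Real.continuous_arctan.div_const _).add continuous_const
  -- the coding function
  set φ : X → ℝ := fun x => q (ψ x) with hφdef
  have hφmeas : Measurable φ := hqcont.measurable.comp hψ.measurable
  have hφinj : Function.Injective φ := hqinj.comp hψ.injective
  have hφ0 : ∀ x, 0 < φ x := fun x => hq0 _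
  have hφ1 : ∀ x, φ x < 1 := fun x => hq1 _
  have hPk : ∀ k : ℕ, Measurable ((P ^ k : Equiv.Perm X) : X → X) := by
    intro k
    induction k with
    | zero => simpa using measurable_id
    | succ k ih =>
        have : ((P ^ (k+1) : Equiv.Perm X) : X → X)
            = ((P ^ k : Equiv.Perm X) : X → X) ∘ (P : X → X) := by
          funext x; simp [pow_succ, Equiv.Perm.mul_apply]
        rw [this]; exact ih.comp hP.1
  set d : X → ℝ := fun x => ⨆ k : ℕ, φ ((P ^ k) x) with hddef
  have hbdd : ∀ x : X, BddAbove (Set.range fun k : ℕ => φ ((P ^ k) x)) := by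
    intro x
    exact ⟨1, by rintro r ⟨k, rfl⟩; exact (hφ1 _).le⟩
  have hdmeas : Measurable d :=
    Measurable.iSup fun k => hφmeas.comp (hPk k)
  -- sup is attained
  have hatt : ∀ x : X, ∃ k : ℕ, d x = φ ((P ^ k) x) := by
    intro x
    obtain ⟨n, hn1, hfix⟩ := hPper x
    have hne : (Finset.range n).Nonempty := ⟨0, Finset.mem_range.2 hn1⟩
    set S := (Finset.range n).image (fun k => φ ((P ^ k) x)) with hS
    have hSne : S.Nonempty := hne.image _
    obtain ⟨k₀, hk₀mem, hk₀max⟩ := (Finset.range n).exists_max_image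
      (fun k => φ ((P ^ k) x)) hne
    refine ⟨k₀, le_antisymm ?_ ?_⟩
    · refine ciSup_le fun k => ?_
      rw [pow_mod_apply P hfix k]
      exact hk₀max _ (Finset.mem_range.2 (Nat.mod_lt _ hn1))
    · exact le_ciSup (hbdd x) k₀
  have hd0 : ∀ x, 0 < d x :=
    fun x => lt_of_lt_of_le (hφ0 x) (by simpa using le_ciSup (hbdd x) 0)
  have hd1 : ∀ x, d x < 1 := by
    intro x; obtain ⟨k, hk⟩ := hatt x; rw [hk]; exact hφ1 _
  -- invariance
  have hdP : ∀ x, d (P x) = d x := by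
    intro x
    apply le_antisymm
    · refine ciSup_le fun k => ?_
      have : φ ((P ^ k) (P x)) = φ ((P ^ (k+1)) x) := by
        rw [pow_succ, Equiv.Perm.mul_apply]
      rw [this]; exact le_ciSup (hbdd x) (k+1)
    · refine ciSup_le fun k => ?_
      obtain ⟨n, hn1, hfix⟩ := hPper x
      have h1 : φ ((P ^ k) x) = φ ((P ^ (k + n - 1)) (P x)) := by
        have h2 : (P ^ (k + n - 1)) (P x) = (P ^ (k + n)) x := by
          conv_rhs => rw [show k + n = (k + n - 1) + 1 from by omega]
          rw [pow_succ, Equiv.Perm.mul_apply]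
        have h3 : (P ^ (k + n)) x = (P ^ k) x := by
          rw [pow_add, Equiv.Perm.mul_apply, hfix]
        rw [h2, h3]
      rw [h1]; exact le_ciSup (hbdd (P x)) (k + n - 1)
  have hdPinv : ∀ x, d (P⁻¹ x) = d x := by
    intro x
    have h := hdP (P⁻¹ x)
    rw [show P (P⁻¹ x) = x from P.apply_symm_apply x] at h
    exact h.symm
  -- fibers of d are countable
  have hfib : ∀ s : ℝ, Set.Countable {x : X | d x = s} := by
    intro s
    have hsub : {x : X | d x = s} ⊆ ⋃ k : ℕ, ((P ^ k : Equiv.Perm X) : X → X) ⁻¹' (φ ⁻¹' {s}) := by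
      intro x hx
      obtain ⟨k, hk⟩ := hatt x
      exact Set.mem_iUnion.2 ⟨k, by simp [← hk, hx.symm, hx]⟩
    refine Set.Countable.mono hsub (Set.countable_iUnion fun k => ?_)
    have hsub2 : Set.Subsingleton (φ ⁻¹' {s}) := by
      intro a ha b hb; exact hφinj (ha.trans hb.symm)
    exact (hsub2.preimage (Equiv.injective _)).countable
  -- the path
  have left_inv : ∀ (t : ℝ), Function.LeftInverse
      (fun x => if d x < t then P⁻¹ x else x) (fun x => if d x < t then P x else x) := by
    intro t x
    dsimp only
    by_cases h : d x < t
    · rw [if_pos h, if_pos (show d (P x) < t by rwa [hdP]), ← Equiv.Perm.mul_apply, inv_mul_cancel, Equiv.Perm.one_apply]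
    · rw [if_neg h, if_neg h]
  have right_inv : ∀ (t : ℝ), Function.RightInverse
      (fun x => if d x < t then P⁻¹ x else x) (fun x => if d x < t then P x else x) := by
    intro t x
    dsimp only
    by_cases h : d x < t
    · rw [if_pos h, if_pos (show d (P⁻¹ x) < t by rwa [hdPinv]), ← Equiv.Perm.mul_apply, mul_inv_cancel, Equiv.Perm.one_apply]
    · rw [if_neg h, if_neg h]
  set f : ℝ → Equiv.Perm X := fun t =>
    { toFun := fun x => if d x < t then P x else x
      invFun := fun x => if d x < t then P⁻¹ x else x
      left_inv := left_inv t
      right_inv := right_inv t } with hfdef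
  have hf_apply : ∀ (t : ℝ) x, f t x = if d x < t then P x else x := fun _ _ => rfl
  have hf_symm : ∀ (t : ℝ) x, (f t)⁻¹ x = if d x < t then P⁻¹ x else x := fun _ _ => rfl
  refine ⟨fun t => f t.1, ?_, ?_, ?_, ?_, ?_⟩
  · intro t
    constructor
    · exact Measurable.ite (hdmeas measurableSet_Iio) hP.1 measurable_id
    · show Measurable fun x => if d x < t.1 then P⁻¹ x else x
      have : Measurable (P⁻¹ : Equiv.Perm X) := by
        rw [Equiv.Perm.inv_def]; exact hP.2
      exact Measurable.ite (hdmeas measurableSet_Iio) this measurable_id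
  · ext x
    rw [hf_apply, if_neg (by exact not_lt.2 (hd0 x).le)]
    rfl
  · ext x
    rw [hf_apply, if_pos (hd1 x)]
  · intro t x
    by_cases h : d x < t.1
    · right; rw [hf_apply, if_pos h]
    · left; rw [hf_apply, if_neg h]
  · intro μ hμprob hμna t₀
    haveI : NoAtoms μ := ⟨hμna⟩
    -- Eset is contained in a d-interval
    have hEsub : ∀ t : Set.Icc (0:ℝ) 1,
        Eset (f t.1) (f t₀.1) ⊆ d ⁻¹' (Set.Ico (min t.1 t₀.1) (max t.1 t₀.1)) := by
      intro t x hx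
      have hcond : ¬ ((d x < t.1) ↔ (d x < t₀.1)) := by
        intro hiff
        rcases hx with hx | hx
        · apply hx
          rw [hf_apply, hf_apply]
          by_cases h : d x < t.1
          · rw [if_pos h, if_pos (hiff.1 h)]
          · rw [if_neg h, if_neg (fun h' => h (hiff.2 h'))]
        · apply hx
          rw [hf_symm, hf_symm]
          by_cases h : d x < t.1
          · rw [if_pos h, if_pos (hiff.1 h)]
          · rw [if_neg h, if_neg (fun h' => h (hiff.2 h'))]
      rw [not_iff] at hcond
      simp only [Set.mem_preimage, Set.mem_Ico, lt_min_iff, le_max_iff, min_le_iff, lt_max_iff]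
      by_cases h : d x < t.1
      · have h2 : ¬ d x < t₀.1 := fun h' => hcond.2 h' h
        exact ⟨Or.inr (not_lt.1 h2), Or.inl h⟩
      · have h2 : d x < t₀.1 := hcond.1 h
        exact ⟨Or.inl (not_lt.1 h), Or.inr h2⟩
    rw [ENNReal.tendsto_nhds_zero]
    intro ε hε
    -- right side
    have hμfib : μ (d ⁻¹' {t₀.1}) = 0 := by
      haveI : NullSingletonClass μ := ⟨hμna⟩
      exact (hfib t₀.1).measure_zero μ
    have hright : Filter.Tendsto (fun n : ℕ => μ (d ⁻¹' Set.Ico t₀.1 (t₀.1 + 1/(n+1))))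
        Filter.atTop (nhds 0) := by
      have h1 : Filter.Tendsto (fun n : ℕ => μ (d ⁻¹' Set.Ico t₀.1 (t₀.1 + 1/(n+1))))
          Filter.atTop (nhds (μ (⋂ n : ℕ, d ⁻¹' Set.Ico t₀.1 (t₀.1 + 1/(n+1))))) := by
        apply tendsto_measure_iInter_atTop
        · exact fun n => ((hdmeas measurableSet_Ico)).nullMeasurableSet
        · intro m n hmn
          apply Set.preimage_mono
          apply Set.Ico_subset_Ico_right
          have : (1:ℝ)/(n+1) ≤ 1/(m+1) := by
            apply one_div_le_one_div_of_le (by positivity)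
            exact_mod_cast by omega
          linarith
        · exact ⟨0, measure_ne_top μ _⟩
      have h2 : (⋂ n : ℕ, d ⁻¹' Set.Ico t₀.1 (t₀.1 + 1/(n+1))) = d ⁻¹' {t₀.1} := by
        ext x
        simp only [Set.mem_iInter, Set.mem_preimage, Set.mem_Ico, Set.mem_singleton_iff]
        constructor
        · intro h
          have hle : t₀.1 ≤ d x := (h 0).1
          have hlt : d x ≤ t₀.1 := by
            by_contra hc
            push_neg at hc
            obtain ⟨n, hn⟩ := exists_nat_one_div_lt (show (0:ℝ) < d x - t₀.1 by linarith)
            have := (h n).2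
            linarith
          linarith
        · intro h
          refine fun n => ⟨h.ge, ?_⟩
          have : (0:ℝ) < 1/(n+1) := by positivity
          linarith
      rw [h2, hμfib] at h1
      exact h1
    have hleft : Filter.Tendsto (fun n : ℕ => μ (d ⁻¹' Set.Ico (t₀.1 - 1/(n+1)) t₀.1))
        Filter.atTop (nhds 0) := by
      have h1 : Filter.Tendsto (fun n : ℕ => μ (d ⁻¹' Set.Ico (t₀.1 - 1/(n+1)) t₀.1))
          Filter.atTop (nhds (μ (⋂ n : ℕ, d ⁻¹' Set.Ico (t₀.1 - 1/(n+1)) t₀.1))) := by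
        apply tendsto_measure_iInter_atTop
        · exact fun n => ((hdmeas measurableSet_Ico)).nullMeasurableSet
        · intro m n hmn
          apply Set.preimage_mono
          apply Set.Ico_subset_Ico_left
          have : (1:ℝ)/(n+1) ≤ 1/(m+1) := by
            apply one_div_le_one_div_of_le (by positivity)
            exact_mod_cast by omega
          linarith
        · exact ⟨0, measure_ne_top μ _⟩
      have h2 : (⋂ n : ℕ, d ⁻¹' Set.Ico (t₀.1 - 1/(n+1)) t₀.1) = ∅ := by
        ext x
        simp only [Set.mem_iInter, Set.mem_preimage, Set.mem_Ico, Set.mem_empty_iff_false,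
          iff_false, not_forall]
        by_contra hc
        push_neg at hc
        have hlt : d x < t₀.1 := (hc 0).2
        obtain ⟨n, hn⟩ := exists_nat_one_div_lt (show (0:ℝ) < t₀.1 - d x by linarith)
        have := (hc n).1
        linarith
      rw [h2, measure_empty] at h1
      exact h1
    obtain ⟨N₁, hN₁⟩ := (hright.eventually_lt_const hε).exists
    obtain ⟨N₂, hN₂⟩ := (hleft.eventually_lt_const hε).exists
    set δ : ℝ := min (1/(N₁+1)) (1/(N₂+1)) with hδdef
    have hδ1 : δ ≤ 1/(N₁+1) := min_le_left _ _
    have hδ2 : δ ≤ 1/(N₂+1) := min_le_right _ _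
    have hδpos : 0 < δ := lt_min (by positivity) (by positivity)
    filter_upwards [Metric.ball_mem_nhds t₀ hδpos] with t ht
    have hdist : |t.1 - t₀.1| < δ := by
      rw [Metric.mem_ball, Subtype.dist_eq, Real.dist_eq] at ht
      exact ht
    rw [abs_sub_lt_iff] at hdist
    refine le_trans (measure_mono (hEsub t)) ?_
    rcases le_total t₀.1 t.1 with hle | hle
    · rw [min_eq_right hle, max_eq_left hle]
      refine le_trans (measure_mono (Set.preimage_mono
        (Set.Ico_subset_Ico_right ?_))) hN₁.le
      have h1 : t.1 - t₀.1 < δ := hdist.1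
      linarith
    · rw [min_eq_left hle, max_eq_right hle]
      refine le_trans (measure_mono (Set.preimage_mono
        (Set.Ico_subset_Ico_left ?_))) hN₂.le
      have h1 : t₀.1 - t.1 < δ := hdist.2
      linarith
end

section
/- Let T be an aperiodic Borel automorphism of an uncountable standard Borel space (X, 𝓑). Then there exists a map f : [0,1] → Aut(X, 𝓑) such that f(0) = id, f(1) = T, each f(t) belongs to the full group [T], f(t) is periodic for every t ∈ [0,1), and f is continuous against all non-atomic measures: for every non-atomic Borel probability measure μ on X and every t₀ ∈ [0,1], μ(E(f(t), f(t₀))) → 0 as t → t₀. -/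
open MeasureTheory Set
open scoped ENNReal

/-- `T` is aperiodic: no point is periodic. -/
def IsAperiodic {X : Type*} (T : Equiv.Perm X) : Prop :=
  ∀ (x : X) (n : ℤ), n ≠ 0 → (T ^ n) x ≠ x

open Filter

namespace APBA

attribute [local instance] Classical.propDecidable

set_option linter.unusedSectionVars false
set_option maxHeartbeats 1000000

section Cut


variable {X : Type*} [MeasurableSpace X]

lemma zpow_apply_add (T : Equiv.Perm X) (i j : ℤ) (x : X) :
    (T ^ (i + j)) x = (T ^ i) ((T ^ j) x) := by
  rw [zpow_add, Equiv.Perm.mul_apply]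

lemma measurable_zpow (T : Equiv.Perm X) (hT : Measurable T) (hT' : Measurable T.symm) :
    ∀ n : ℤ, Measurable ⇑(T ^ n) := by
  intro n
  induction n using Int.induction_on with
  | zero => simpa using measurable_id
  | succ k ih =>
      have : (T ^ ((k : ℤ) + 1)) = T ^ (k : ℤ) * T := by rw [zpow_add_one]
      rw [this]
      have : ⇑(T ^ (k : ℤ) * T) = ⇑(T ^ (k : ℤ)) ∘ ⇑T := rfl
      rw [this]; exact ih.comp hT
  | pred k ih =>
      have : (T ^ (-(k : ℤ) - 1)) = T ^ (-(k : ℤ)) * T⁻¹ := by rw [zpow_sub_one]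
      rw [this]
      have h2 : ⇑(T ^ (-(k : ℤ)) * T⁻¹) = ⇑(T ^ (-(k : ℤ))) ∘ ⇑(T.symm) := rfl
      rw [h2]; exact ih.comp hT'

lemma measurable_zpow_apply (T : Equiv.Perm X) (hT : Measurable T) (hT' : Measurable T.symm)
    (g : X → ℤ) (hg : Measurable g) : Measurable (fun x => (T ^ (g x)) x) := by
  intro s hs
  have : (fun x => (T ^ (g x)) x) ⁻¹' s = ⋃ n : ℤ, {x | g x = n} ∩ (⇑(T ^ n)) ⁻¹' s := by
    ext x
    simp only [mem_preimage, mem_iUnion, mem_inter_iff, mem_setOf_eq]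
    constructor
    · intro h; exact ⟨g x, rfl, h⟩
    · rintro ⟨n, hn, h⟩; rwa [hn]
  rw [this]
  exact MeasurableSet.iUnion fun n =>
    (hg (measurableSet_singleton n)).inter (measurable_zpow T hT hT' n hs)

/-! ### Cut permutations -/

variable (T : Equiv.Perm X) (C : Set X)

/-- `aC T C x` : the least `n` with `T^(-n) x ∈ C`. -/
noncomputable def aC (x : X) : ℕ :=
  if h : ∃ n : ℕ, (T ^ (-(n : ℤ))) x ∈ C then Nat.find h else 0

/-- `bC T C x` : the least `n` with `T^(n+1) x ∈ C`. -/
noncomputable def bC (x : X) : ℕ :=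
  if h : ∃ n : ℕ, (T ^ ((n : ℤ) + 1)) x ∈ C then Nat.find h else 0

variable {T C}

lemma aC_mem {x : X} (h : ∃ n : ℕ, (T ^ (-(n : ℤ))) x ∈ C) :
    (T ^ (-(aC T C x : ℤ))) x ∈ C := by
  rw [aC, dif_pos h]; exact Nat.find_spec h

lemma aC_min {x : X} (h : ∃ n : ℕ, (T ^ (-(n : ℤ))) x ∈ C) {m : ℕ} (hm : m < aC T C x) :
    (T ^ (-(m : ℤ))) x ∉ C := by
  rw [aC, dif_pos h] at hm; exact Nat.find_min h hm

lemma aC_le {x : X} (h : ∃ n : ℕ, (T ^ (-(n : ℤ))) x ∈ C) {m : ℕ}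
    (hm : (T ^ (-(m : ℤ))) x ∈ C) : aC T C x ≤ m := by
  rw [aC, dif_pos h]; exact Nat.find_le hm

lemma aC_eq_zero {x : X} (hx : x ∈ C) : aC T C x = 0 := by
  have h : ∃ n : ℕ, (T ^ (-(n : ℤ))) x ∈ C := ⟨0, by simpa using hx⟩
  have := aC_le h (m := 0) (by simpa using hx)
  omega

lemma bC_mem {x : X} (h : ∃ n : ℕ, (T ^ ((n : ℤ) + 1)) x ∈ C) :
    (T ^ ((bC T C x : ℤ) + 1)) x ∈ C := by
  rw [bC, dif_pos h]; exact Nat.find_spec h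

lemma bC_min {x : X} (h : ∃ n : ℕ, (T ^ ((n : ℤ) + 1)) x ∈ C) {m : ℕ} (hm : m < bC T C x) :
    (T ^ ((m : ℤ) + 1)) x ∉ C := by
  rw [bC, dif_pos h] at hm; exact Nat.find_min h hm

lemma bC_le {x : X} (h : ∃ n : ℕ, (T ^ ((n : ℤ) + 1)) x ∈ C) {m : ℕ}
    (hm : (T ^ ((m : ℤ) + 1)) x ∈ C) : bC T C x ≤ m := by
  rw [bC, dif_pos h]; exact Nat.find_le hm

variable (T C)

/-- jump exponent of the cut permutation -/
noncomputable def cutσ (x : X) : ℤ := if T x ∈ C then -(aC T C x : ℤ) else 1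

/-- jump exponent of the inverse cut permutation -/
noncomputable def cutτ (x : X) : ℤ := if x ∈ C then (bC T C x : ℤ) else -1


variable {T C} in
lemma cutσ_pos {x : X} (h : T x ∈ C) : cutσ T C x = -(aC T C x : ℤ) := if_pos h
variable {T C} in
lemma cutσ_neg {x : X} (h : T x ∉ C) : cutσ T C x = 1 := if_neg h
variable {T C} in
lemma cutτ_pos {x : X} (h : x ∈ C) : cutτ T C x = (bC T C x : ℤ) := if_pos h
variable {T C} in
lemma cutτ_neg {x : X} (h : x ∉ C) : cutτ T C x = -1 := if_neg h

/-- hypothesis: every forward orbit meets `C` (at a positive time) -/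
def CutF : Prop := ∀ x : X, ∃ n : ℕ, (T ^ ((n : ℤ) + 1)) x ∈ C

/-- hypothesis: every backward orbit meets `C` (at a nonneg time) -/
def CutB : Prop := ∀ x : X, ∃ n : ℕ, (T ^ (-(n : ℤ))) x ∈ C

/-- the periodic permutation obtained by cutting the orbits of `T` at `C`. -/
noncomputable def cutPerm (hf : CutF T C) (hb : CutB T C) : Equiv.Perm X where
  toFun x := (T ^ (cutσ T C x)) x
  invFun x := (T ^ (cutτ T C x)) x
  left_inv := by
    intro x
    beta_reduce
    by_cases h : T x ∈ C
    · have hx := hb x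
      set a := aC T C x with ha
      have hy : (T ^ (-(a : ℤ))) x ∈ C := aC_mem hx
      rw [cutσ_pos h]
      set y := (T ^ (-(a : ℤ))) x with hyd
      rw [cutτ_pos hy]
      have hby : bC T C y = a := by
        have hyex : ∃ n : ℕ, (T ^ ((n : ℤ) + 1)) y ∈ C := ⟨a, by
          rw [hyd, ← zpow_apply_add]
          simpa using h⟩
        have h1 : bC T C y ≤ a := bC_le hyex (by
          rw [hyd, ← zpow_apply_add]; simpa using h)
        rcases lt_or_eq_of_le h1 with h2 | h2
        · exfalso
          have h3 := bC_mem hyex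
          rw [hyd, ← zpow_apply_add] at h3
          set m := bC T C y with hm
          have hma : (m : ℤ) + 1 + -(a : ℤ) = -((a - m - 1 : ℕ) : ℤ) := by
            push_cast [Nat.cast_sub (by omega : m + 1 ≤ a)]
            omega
          rw [hma] at h3
          exact aC_min hx (by omega : a - m - 1 < a) h3
        · exact h2
      rw [hby, hyd, ← zpow_apply_add]
      simp
    · rw [cutσ_neg h]
      have h1 : (T ^ (1 : ℤ)) x = T x := by simp
      rw [h1, cutτ_neg h]
      have : (T ^ (-1 : ℤ)) (T x) = (T ^ ((-1 : ℤ) + 1)) x := by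
        rw [zpow_apply_add]; simp
      rw [this]; simp
  right_inv := by
    intro x
    beta_reduce
    by_cases h : x ∈ C
    · have hx := hf x
      set b := bC T C x with hbdef
      rw [cutτ_pos h]
      set y := (T ^ (b : ℤ)) x with hyd
      have hTy : T y ∈ C := by
        have := bC_mem hx
        have h2 : T y = (T ^ ((b : ℤ) + 1)) x := by
          rw [hyd, add_comm, zpow_apply_add]; simp
        rw [h2]; exact this
      rw [cutσ_pos hTy]
      have hay : aC T C y = b := by
        have hyex : ∃ n : ℕ, (T ^ (-(n : ℤ))) y ∈ C := ⟨b, by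
          rw [hyd, ← zpow_apply_add]; simpa using h⟩
        have h1 : aC T C y ≤ b := aC_le hyex (by rw [hyd, ← zpow_apply_add]; simpa using h)
        rcases lt_or_eq_of_le h1 with h2 | h2
        · exfalso
          have h3 := aC_mem hyex
          rw [hyd, ← zpow_apply_add] at h3
          set m := aC T C y with hm
          have hma : -(m : ℤ) + (b : ℤ) = ((b - m - 1 : ℕ) : ℤ) + 1 := by
            push_cast [Nat.cast_sub (by omega : m + 1 ≤ b)]
            omega
          rw [hma] at h3
          exact bC_min hx (by omega : b - m - 1 < b) h3
        · exact h2
      rw [hay, hyd, ← zpow_apply_add]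
      simp
    · rw [cutτ_neg h]
      have h1 : (T ^ (-1 : ℤ)) x = T.symm x := by simp [Equiv.Perm.inv_def]
      have hTy : T ((T ^ (-1 : ℤ)) x) = x := by
        have : T ((T ^ (-1 : ℤ)) x) = (T ^ ((1 : ℤ) + (-1 : ℤ))) x := by
          rw [zpow_apply_add]; simp
        rw [this]; simp
      rw [cutσ_neg (by rw [hTy]; exact h)]
      have : (T ^ (1 : ℤ)) ((T ^ (-1 : ℤ)) x) = (T ^ ((1 : ℤ) + (-1 : ℤ))) x := by
        rw [zpow_apply_add]
      rw [this]; simp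

lemma cutPerm_apply (hf : CutF T C) (hb : CutB T C) (x : X) :
    cutPerm T C hf hb x = (T ^ (cutσ T C x)) x := rfl

lemma cutPerm_symm_apply (hf : CutF T C) (hb : CutB T C) (x : X) :
    (cutPerm T C hf hb).symm x = (T ^ (cutτ T C x)) x := rfl






variable {T C}

lemma zp {x : X} {i j k : ℤ} (h : i + j = k) : (T ^ i) ((T ^ j) x) = (T ^ k) x := by
  rw [← h, zpow_apply_add]

lemma apply_eq_zpow (x : X) : T x = (T ^ (1 : ℤ)) x := by simp

lemma zpT {x : X} {i k : ℤ} (h : i + 1 = k) : (T ^ i) (T x) = (T ^ k) x := by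
  rw [apply_eq_zpow x, zp h]

lemma symm_apply_eq_zpow (x : X) : T.symm x = (T ^ (-1 : ℤ)) x := by
  have : T ^ (-1 : ℤ) = T⁻¹ := by simp
  rw [this, Equiv.Perm.inv_def]

/-! ### periodicity -/

lemma bC_T (hf : CutF T C) {x : X} {m : ℕ} (h : bC T C x = m + 1) :
    bC T C (T x) = m := by
  refine le_antisymm (bC_le (hf (T x)) ?_) ?_
  · rw [zpT (by push_cast; ring : ((m:ℤ)+1) + 1 = ((m+1 : ℕ) : ℤ) + 1)]
    rw [← h]
    exact bC_mem (hf x)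
  · by_contra hlt
    push_neg at hlt
    have h3 := bC_mem (hf (T x))
    set j := bC T C (T x) with hj
    rw [zpT (by push_cast; ring : ((j:ℤ)+1) + 1 = ((j+1 : ℕ) : ℤ) + 1)] at h3
    exact bC_min (hf x) (by omega : j + 1 < bC T C x) h3

lemma aC_T (hb : CutB T C) {x : X} (h : T x ∉ C) :
    aC T C (T x) = aC T C x + 1 := by
  refine le_antisymm (aC_le (hb (T x)) ?_) ?_
  · rw [zpT (by push_cast; ring : (-(((aC T C x)+1 : ℕ) : ℤ)) + 1 = -(aC T C x : ℤ))]
    exact aC_mem (hb x)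
  · by_contra hlt
    push_neg at hlt
    have h3 := aC_mem (hb (T x))
    set j := aC T C (T x) with hj
    rcases Nat.eq_zero_or_pos j with h0 | h0
    · rw [h0] at h3; simp only [Nat.cast_zero, neg_zero, zpow_zero] at h3
      exact h (by simpa using h3)
    · rw [zpT (by push_cast; omega : (-(j : ℤ)) + 1 = -(((j - 1 : ℕ)) : ℤ))] at h3
      exact aC_min (hb x) (by omega : j - 1 < aC T C x) h3

lemma cut_pow_top (hf : CutF T C) (hb : CutB T C) :
    ∀ (k : ℕ) (x : X), bC T C x = k →
      ((cutPerm T C hf hb) ^ (k + 1)) x = (T ^ (-(aC T C x : ℤ))) x := by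
  intro k
  induction k with
  | zero =>
      intro x hx
      have hTx : T x ∈ C := by
        have := bC_mem (hf x)
        rw [hx] at this
        simpa using this
      rw [pow_one, cutPerm_apply T C hf hb, cutσ_pos hTx]
  | succ m ih =>
      intro x hx
      have hTx : T x ∉ C := by
        have := bC_min (hf x) (m := 0) (by omega)
        simpa using this
      have hstep : cutPerm T C hf hb x = T x := by
        rw [cutPerm_apply T C hf hb, cutσ_neg hTx, ← apply_eq_zpow]
      have : ((cutPerm T C hf hb) ^ (m + 1 + 1)) x
          = ((cutPerm T C hf hb) ^ (m + 1)) (cutPerm T C hf hb x) := by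
        rw [pow_succ, Equiv.Perm.mul_apply]
      rw [this, hstep, ih (T x) (bC_T hf hx), aC_T hb hTx, apply_eq_zpow x,
        zp (by push_cast; ring : (-(((aC T C x)+1 : ℕ) : ℤ)) + 1 = -(aC T C x : ℤ))]

lemma cut_pow_bot (hf : CutF T C) (hb : CutB T C) :
    ∀ (k : ℕ) (x : X), aC T C x = k →
      ((cutPerm T C hf hb) ^ k) ((T ^ (-(k : ℤ))) x) = x := by
  intro k
  induction k with
  | zero => intro x _; simp
  | succ m ih =>
      intro x hx
      have hxC : x ∉ C := by
        intro hc
        rw [aC_eq_zero hc] at hx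
        omega
      set y := (T ^ (-1 : ℤ)) x with hy
      have hTy : T y = x := by
        rw [hy, apply_eq_zpow, zp (by ring : (1 : ℤ) + (-1) = 0)]
        simp
      have hay : aC T C y = m := by
        refine le_antisymm (aC_le (hb y) ?_) ?_
        · rw [hy, zp (by push_cast; omega : (-(m : ℤ)) + (-1) = -((m + 1 : ℕ) : ℤ))]
          rw [← hx]
          exact aC_mem (hb x)
        · by_contra hlt
          push_neg at hlt
          set j := aC T C y with hj
          have h3 := aC_mem (hb y)
          rw [hy, zp (by push_cast; omega : (-(j : ℤ)) + (-1) = -((j + 1 : ℕ) : ℤ))] at h3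
          exact aC_min (hb x) (by omega : j + 1 < aC T C x) h3
      have harg : (T ^ (-((m+1 : ℕ) : ℤ))) x = (T ^ (-(m : ℤ))) y := by
        rw [hy, zp (by push_cast; omega : (-(m : ℤ)) + (-1) = -((m + 1 : ℕ) : ℤ))]
      rw [harg]
      have : ((cutPerm T C hf hb) ^ (m + 1)) ((T ^ (-(m : ℤ))) y)
          = cutPerm T C hf hb (((cutPerm T C hf hb) ^ m) ((T ^ (-(m : ℤ))) y)) := by
        rw [pow_succ', Equiv.Perm.mul_apply]
      rw [this, ih y hay, cutPerm_apply T C hf hb, cutσ_neg (by rw [hTy]; exact hxC), ← apply_eq_zpow,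
        hTy]

lemma cutPerm_periodic (hf : CutF T C) (hb : CutB T C) (x : X) :
    ∃ n : ℕ, 1 ≤ n ∧ ((cutPerm T C hf hb) ^ n) x = x := by
  refine ⟨aC T C x + (bC T C x + 1), by omega, ?_⟩
  rw [pow_add, Equiv.Perm.mul_apply, cut_pow_top hf hb _ x rfl,
    cut_pow_bot hf hb _ x rfl]

/-! ### measurability -/

lemma measurable_aC (hTm : Measurable T) (hTm' : Measurable T.symm)
    (hC : MeasurableSet C) (hb : CutB T C) : Measurable (aC T C) := by
  apply measurable_to_countable'
  intro n
  have : aC T C ⁻¹' {n} = ((⇑(T ^ (-(n : ℤ)))) ⁻¹' C) ∩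
      ⋂ m ∈ Finset.range n, ((⇑(T ^ (-(m : ℤ)))) ⁻¹' C)ᶜ := by
    ext x
    simp only [mem_preimage, mem_singleton_iff, mem_inter_iff, mem_iInter, Finset.mem_range,
      mem_compl_iff]
    constructor
    · intro h
      refine ⟨by rw [← h]; exact aC_mem (hb x), fun m hm => aC_min (hb x) (by omega)⟩
    · rintro ⟨h1, h2⟩
      have hle := aC_le (hb x) h1
      rcases lt_or_eq_of_le hle with h3 | h3
      · exact absurd (aC_mem (hb x)) (h2 _ h3)
      · exact h3
  rw [this]
  exact ((measurable_zpow T hTm hTm' _) hC).inter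
    (MeasurableSet.biInter (to_countable _)
      fun m _ => ((measurable_zpow T hTm hTm' _) hC).compl)

lemma measurable_bC (hTm : Measurable T) (hTm' : Measurable T.symm)
    (hC : MeasurableSet C) (hf : CutF T C) : Measurable (bC T C) := by
  apply measurable_to_countable'
  intro n
  have : bC T C ⁻¹' {n} = ((⇑(T ^ ((n : ℤ) + 1))) ⁻¹' C) ∩
      ⋂ m ∈ Finset.range n, ((⇑(T ^ ((m : ℤ) + 1))) ⁻¹' C)ᶜ := by
    ext x
    simp only [mem_preimage, mem_singleton_iff, mem_inter_iff, mem_iInter, Finset.mem_range,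
      mem_compl_iff]
    constructor
    · intro h
      refine ⟨by rw [← h]; exact bC_mem (hf x), fun m hm => bC_min (hf x) (by omega)⟩
    · rintro ⟨h1, h2⟩
      have hle := bC_le (hf x) h1
      rcases lt_or_eq_of_le hle with h3 | h3
      · exact absurd (bC_mem (hf x)) (h2 _ h3)
      · exact h3
  rw [this]
  exact ((measurable_zpow T hTm hTm' _) hC).inter
    (MeasurableSet.biInter (to_countable _)
      fun m _ => ((measurable_zpow T hTm hTm' _) hC).compl)

lemma measurable_nat_comp {g : X → ℕ} (hg : Measurable g) (u : ℕ → ℤ) :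
    Measurable (fun x => u (g x)) := by
  apply measurable_to_countable'
  intro i
  have : (fun x => u (g x)) ⁻¹' {i} = g ⁻¹' (u ⁻¹' {i}) := rfl
  rw [this]
  exact hg (by trivial)

lemma measurable_cutσ (hTm : Measurable T) (hTm' : Measurable T.symm)
    (hC : MeasurableSet C) (hb : CutB T C) : Measurable (cutσ T C) := by
  unfold cutσ
  exact Measurable.ite (hTm hC)
    (measurable_nat_comp (measurable_aC hTm hTm' hC hb) (fun n => -(n : ℤ)))
    measurable_const

lemma measurable_cutτ (hTm : Measurable T) (hTm' : Measurable T.symm)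
    (hC : MeasurableSet C) (hf : CutF T C) : Measurable (cutτ T C) := by
  unfold cutτ
  exact Measurable.ite hC
    (measurable_nat_comp (measurable_bC hTm hTm' hC hf) (fun n => (n : ℤ)))
    measurable_const

lemma cutPerm_measurable (hTm : Measurable T) (hTm' : Measurable T.symm)
    (hC : MeasurableSet C) (hf : CutF T C) (hb : CutB T C) :
    Measurable ⇑(cutPerm T C hf hb) ∧ Measurable ⇑(cutPerm T C hf hb).symm := by
  constructor
  · have : ⇑(cutPerm T C hf hb) = fun x => (T ^ (cutσ T C x)) x := by
      funext x; exact cutPerm_apply T C hf hb x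
    rw [this]
    exact measurable_zpow_apply T hTm hTm' _ (measurable_cutσ hTm hTm' hC hb)
  · have : ⇑(cutPerm T C hf hb).symm = fun x => (T ^ (cutτ T C x)) x := by
      funext x; exact cutPerm_symm_apply T C hf hb x
    rw [this]
    exact measurable_zpow_apply T hTm hTm' _ (measurable_cutτ hTm hTm' hC hf)

/-! ### cutting `univ` gives the identity -/

lemma cutPerm_univ (hf : CutF T univ) (hb : CutB T univ) :
    cutPerm T univ hf hb = 1 := by
  apply Equiv.ext
  intro x
  rw [cutPerm_apply T univ hf hb, cutσ_pos (mem_univ _), aC_eq_zero (mem_univ _)]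
  simp

/-! ### the difference set estimate -/

variable (T) in
/-- control set for the difference of two cut permutations -/
def Wset (C' D : Set X) : Set X :=
  {x | ∃ i : ℤ, -(aC T C' x : ℤ) ≤ i ∧ i ≤ (bC T C' x : ℤ) + 1 ∧ (T ^ i) x ∈ D}

lemma Wset_mono {C' D D' : Set X} (h : D ⊆ D') : Wset T C' D ⊆ Wset T C' D' := by
  rintro x ⟨i, h1, h2, h3⟩
  exact ⟨i, h1, h2, h h3⟩

lemma Wset_anti {C' C'' D : Set X} (hb' : CutB T C') (hf' : CutF T C')
    (hb'' : CutB T C'') (hf'' : CutF T C'') (hsub : C'' ⊆ C') :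
    Wset T C' D ⊆ Wset T C'' D := by
  rintro x ⟨i, h1, h2, h3⟩
  have ha : aC T C' x ≤ aC T C'' x := aC_le (hb' x) (hsub (aC_mem (hb'' x)))
  have hbb : bC T C' x ≤ bC T C'' x := bC_le (hf' x) (hsub (bC_mem (hf'' x)))
  exact ⟨i, le_trans (by push_cast; omega) h1, le_trans h2 (by push_cast; omega), h3⟩

lemma measurable_Wset (hTm : Measurable T) (hTm' : Measurable T.symm)
    {C' D : Set X} (hC' : MeasurableSet C') (hD : MeasurableSet D)
    (hb' : CutB T C') (hf' : CutF T C') : MeasurableSet (Wset T C' D) := by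
  have : Wset T C' D = ⋃ i : ℤ,
      ({x | -(aC T C' x : ℤ) ≤ i} ∩ {x | i ≤ (bC T C' x : ℤ) + 1} ∩ (⇑(T ^ i)) ⁻¹' D) := by
    ext x
    simp only [Wset, mem_setOf_eq, mem_iUnion, mem_inter_iff, mem_preimage]
    tauto
  rw [this]
  refine MeasurableSet.iUnion fun i => MeasurableSet.inter (MeasurableSet.inter ?_ ?_)
    ((measurable_zpow T hTm hTm' i) hD)
  · have : {x | -(aC T C' x : ℤ) ≤ i} = (aC T C') ⁻¹' {n | -(n : ℤ) ≤ i} := rfl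
    rw [this]
    exact (measurable_aC hTm hTm' hC' hb') (by trivial)
  · have : {x | i ≤ (bC T C' x : ℤ) + 1} = (bC T C') ⁻¹' {n | i ≤ (n : ℤ) + 1} := rfl
    rw [this]
    exact (measurable_bC hTm hTm' hC' hf') (by trivial)

lemma iInter_Wset {C' : Set X} (D : ℕ → Set X) (hD : Antitone D) :
    (⋂ n, Wset T C' (D n)) ⊆ ⋃ i : ℤ, (⇑(T ^ i)) ⁻¹' (⋂ n, D n) := by
  intro x hx
  by_contra hco
  simp only [mem_iUnion, mem_preimage, mem_iInter, not_exists, not_forall] at hco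
  choose g hg using hco
  set s : Finset ℤ := Finset.Icc (-(aC T C' x : ℤ)) ((bC T C' x : ℤ) + 1) with hs
  set N := s.sup g with hN
  obtain ⟨i, hi1, hi2, hi3⟩ := (mem_iInter.mp hx N : x ∈ Wset T C' (D N))
  have his : i ∈ s := Finset.mem_Icc.mpr ⟨hi1, hi2⟩
  exact hg i (hD (Finset.le_sup his) hi3)

lemma Eset_symm (S S' : Equiv.Perm X) : Eset S S' = Eset S' S := by
  unfold Eset
  ext x
  simp only [mem_union, mem_setOf_eq]
  tauto

lemma Eset_cut_subset {C C' : Set X} (hsub : C' ⊆ C)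
    (hf : CutF T C) (hb : CutB T C) (hf' : CutF T C') (hb' : CutB T C') :
    Eset (cutPerm T C hf hb) (cutPerm T C' hf' hb') ⊆ Wset T C' (C \ C') := by
  intro x hx
  by_contra hW
  have notD : ∀ i : ℤ, -(aC T C' x : ℤ) ≤ i → i ≤ (bC T C' x : ℤ) + 1 →
      (T ^ i) x ∈ C → (T ^ i) x ∈ C' := by
    intro i h1 h2 h3
    by_contra h4
    exact hW ⟨i, h1, h2, h3, h4⟩
  have hfwd : cutPerm T C hf hb x = cutPerm T C' hf' hb' x := by
    by_cases h1 : T x ∈ C'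
    · have h2 : T x ∈ C := hsub h1
      rw [cutPerm_apply T C hf hb, cutPerm_apply T C' hf' hb', cutσ_pos h1, cutσ_pos h2]
      have hle : aC T C x ≤ aC T C' x := aC_le (hb x) (hsub (aC_mem (hb' x)))
      rcases lt_or_eq_of_le hle with h3 | h3
      · exfalso
        have h4 := aC_mem (hb x)
        have h5 := notD (-(aC T C x : ℤ)) (by push_cast; omega) (by push_cast; omega) h4
        exact aC_min (hb' x) h3 h5
      · rw [h3]
    · have h2 : T x ∉ C := by
        intro hc
        have h5 := notD 1 (by push_cast; omega) (by push_cast; omega)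
          (by rwa [← apply_eq_zpow])
        rw [← apply_eq_zpow] at h5
        exact h1 h5
      rw [cutPerm_apply T C hf hb, cutPerm_apply T C' hf' hb', cutσ_neg h1, cutσ_neg h2]
  have hbwd : (cutPerm T C hf hb).symm x = (cutPerm T C' hf' hb').symm x := by
    by_cases h1 : x ∈ C'
    · have h2 : x ∈ C := hsub h1
      rw [cutPerm_symm_apply T C hf hb, cutPerm_symm_apply T C' hf' hb', cutτ_pos h1, cutτ_pos h2]
      have hle : bC T C x ≤ bC T C' x := bC_le (hf x) (hsub (bC_mem (hf' x)))
      rcases lt_or_eq_of_le hle with h3 | h3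
      · exfalso
        have h4 := bC_mem (hf x)
        have h5 := notD ((bC T C x : ℤ) + 1) (by push_cast; omega) (by push_cast; omega) h4
        exact bC_min (hf' x) h3 h5
      · rw [h3]
    · have h2 : x ∉ C := by
        intro hc
        exact h1 (notD 0 (by push_cast; omega) (by push_cast; omega) (by simpa using hc))
      rw [cutPerm_symm_apply T C hf hb, cutPerm_symm_apply T C' hf' hb', cutτ_neg h1, cutτ_neg h2]
  rcases hx with hx | hx
  · exact hx hfwd
  · rw [mem_setOf_eq, Equiv.Perm.inv_def, Equiv.Perm.inv_def] at hx
    exact hx hbwd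

lemma Eset_cut_T {C : Set X} (hf : CutF T C) (hb : CutB T C) :
    Eset (cutPerm T C hf hb) T ⊆ (⇑T) ⁻¹' C ∪ C := by
  intro x hx
  rcases hx with hx | hx
  · rw [mem_setOf_eq] at hx
    left
    by_contra h
    exact hx (by rw [cutPerm_apply T C hf hb, cutσ_neg (show T x ∉ C from h), ← apply_eq_zpow])
  · rw [mem_setOf_eq, Equiv.Perm.inv_def, Equiv.Perm.inv_def] at hx
    right
    by_contra h
    refine hx ?_
    rw [cutPerm_symm_apply T C hf hb, cutτ_neg h, ← symm_apply_eq_zpow]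


end Cut

section Markers

variable {X : Type*} [MeasurableSpace X]
variable {T : Equiv.Perm X}

variable (T)
variable (e : X → ℝ)

noncomputable def psi (x : X) : ℝ := 1/2 + Real.arctan (e x) / Real.pi

noncomputable def phi (x : X) : ℝ≥0∞ := ENNReal.ofReal (psi e x)

noncomputable def lplus (x : X) : ℝ≥0∞ :=
  liminf (fun n : ℕ => phi e ((T ^ (n : ℤ)) x)) atTop

noncomputable def lminus (x : X) : ℝ≥0∞ :=
  liminf (fun n : ℕ => phi e ((T ^ (-(n : ℤ))) x)) atTop

def NN : Set X := {x | phi e x = lplus T e x ∨ phi e x = lminus T e x}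

def NNmin : Set X :=
  NN T e ∩ {x | ∀ j : ℤ, (T ^ j) x ∈ NN T e → phi e x ≤ phi e ((T ^ j) x)}

def ZZ : Set X := {x | ∃ j : ℤ, (T ^ j) x ∈ NN T e}

noncomputable def kap (x : X) : ℤ :=
  if h : ∃ j : ℤ, (T ^ (-j)) x ∈ NNmin T e then h.choose else 0

noncomputable def MM : ℕ → Set X
  | 0 => univ
  | (k+1) =>
      (ZZ T e ∩ {x | ((2 : ℤ) ^ (k+1)) ∣ kap T e x ∧ kap T e x ≠ 0}) ∪
      ((ZZ T e)ᶜ ∩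
        ({x | phi e x < lplus T e x + (2⁻¹ : ℝ≥0∞) ^ (k+1) ∧
              lplus T e x < phi e x + (2⁻¹ : ℝ≥0∞) ^ (k+1)} ∪
         {x | phi e x < lminus T e x + (2⁻¹ : ℝ≥0∞) ^ (k+1) ∧
              lminus T e x < phi e x + (2⁻¹ : ℝ≥0∞) ^ (k+1)}))

variable {T e}

/-! ### basic facts about `psi`, `phi` -/

lemma psi_mem_Ioo (x : X) : psi e x ∈ Ioo (0 : ℝ) 1 := by
  have h1 := Real.arctan_lt_pi_div_two (e x)
  have h2 := Real.neg_pi_div_two_lt_arctan (e x)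
  have hπ := Real.pi_pos
  have hne := Real.pi_ne_zero
  have e1 : (Real.pi / 2) / Real.pi = 1 / 2 := by
    field_simp
  have i1 : Real.arctan (e x) / Real.pi < (Real.pi / 2) / Real.pi := by gcongr
  have i2 : -(Real.pi / 2) / Real.pi < Real.arctan (e x) / Real.pi := by gcongr
  rw [neg_div, e1] at i2
  rw [e1] at i1
  constructor
  · unfold psi; linarith
  · unfold psi; linarith

lemma psi_inj (hei : Function.Injective e) : Function.Injective (psi e) := by
  intro x y h
  unfold psi at h
  have hne := Real.pi_ne_zero
  have : Real.arctan (e x) = Real.arctan (e y) := by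
    field_simp at h
    linarith
  exact hei (Real.arctan_injective this)

lemma phi_pos (x : X) : phi e x ≠ 0 := by
  unfold phi
  simp only [ne_eq, ENNReal.ofReal_eq_zero, not_le]
  exact (psi_mem_Ioo x).1

lemma phi_le_one (x : X) : phi e x ≤ 1 := by
  unfold phi
  rw [show (1 : ℝ≥0∞) = ENNReal.ofReal 1 by simp]
  exact ENNReal.ofReal_le_ofReal (psi_mem_Ioo x).2.le

lemma phi_ne_top (x : X) : phi e x ≠ ⊤ := ENNReal.ofReal_ne_top

lemma phi_inj (hei : Function.Injective e) : Function.Injective (phi e) := by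
  intro x y h
  unfold phi at h
  rw [ENNReal.ofReal_eq_ofReal_iff (psi_mem_Ioo x).1.le (psi_mem_Ioo y).1.le] at h
  exact psi_inj hei h

lemma measurable_psi (hem : Measurable e) : Measurable (psi e) := by
  unfold psi
  exact measurable_const.add ((Real.continuous_arctan.measurable.comp hem).div_const _)

lemma measurable_phi (hem : Measurable e) : Measurable (phi e) :=
  ENNReal.measurable_ofReal.comp (measurable_psi hem)

/-! ### the liminf functions -/

lemma measurable_lplus (hem : Measurable e) (hTm : Measurable T) (hTm' : Measurable T.symm) :
    Measurable (lplus T e) :=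
  Measurable.liminf fun i => (measurable_phi hem).comp (measurable_zpow T hTm hTm' (i : ℤ))

lemma measurable_lminus (hem : Measurable e) (hTm : Measurable T) (hTm' : Measurable T.symm) :
    Measurable (lminus T e) :=
  Measurable.liminf fun i => (measurable_phi hem).comp (measurable_zpow T hTm hTm' (-(i : ℤ)))

lemma lplus_le_one (x : X) : lplus T e x ≤ 1 := by
  unfold lplus
  have : liminf (fun _ : ℕ => (1 : ℝ≥0∞)) atTop = 1 := liminf_const 1
  rw [← this]
  exact liminf_le_liminf (Eventually.of_forall fun n => phi_le_one _)

lemma lminus_le_one (x : X) : lminus T e x ≤ 1 := by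
  unfold lminus
  have : liminf (fun _ : ℕ => (1 : ℝ≥0∞)) atTop = 1 := liminf_const 1
  rw [← this]
  exact liminf_le_liminf (Eventually.of_forall fun n => phi_le_one _)

lemma lplus_ne_top (x : X) : lplus T e x ≠ ⊤ :=
  fun h => by simpa [h] using lplus_le_one (T := T) (e := e) x

lemma lminus_ne_top (x : X) : lminus T e x ≠ ⊤ :=
  fun h => by simpa [h] using lminus_le_one (T := T) (e := e) x

lemma lplus_T (x : X) : lplus T e (T x) = lplus T e x := by
  unfold lplus
  have h : (fun n : ℕ => phi e ((T ^ (n : ℤ)) (T x)))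
      = fun n : ℕ => phi e ((T ^ (((n + 1 : ℕ)) : ℤ)) x) := by
    funext n
    rw [zpT (by push_cast; ring : ((n : ℤ)) + 1 = (((n + 1 : ℕ)) : ℤ))]
  rw [h]
  exact liminf_nat_add (fun n : ℕ => phi e ((T ^ (n : ℤ)) x)) 1

lemma lminus_T (x : X) : lminus T e (T x) = lminus T e x := by
  unfold lminus
  have h : (fun n : ℕ => phi e ((T ^ (-(n : ℤ))) x))
      = fun n : ℕ => phi e ((T ^ (-((n + 1 : ℕ) : ℤ))) (T x)) := by
    funext n
    rw [zpT (by push_cast; ring : (-((n + 1 : ℕ) : ℤ)) + 1 = -(n : ℤ))]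
  rw [h]
  exact (liminf_nat_add (fun n : ℕ => phi e ((T ^ (-(n : ℤ))) (T x))) 1).symm

lemma lplus_symm (x : X) : lplus T e (T.symm x) = lplus T e x := by
  have := lplus_T (T := T) (e := e) (T.symm x)
  rw [Equiv.apply_symm_apply] at this
  exact this.symm

lemma lminus_symm (x : X) : lminus T e (T.symm x) = lminus T e x := by
  have := lminus_T (T := T) (e := e) (T.symm x)
  rw [Equiv.apply_symm_apply] at this
  exact this.symm

lemma symm_apply_eq_zpow' (x : X) : T.symm x = (T ^ (-1 : ℤ)) x := by
  have : T ^ (-1 : ℤ) = T⁻¹ := by simp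
  rw [this, Equiv.Perm.inv_def]

lemma lplus_zpow (j : ℤ) (x : X) : lplus T e ((T ^ j) x) = lplus T e x := by
  induction j using Int.induction_on with
  | zero => simp
  | succ k ih =>
      have : (T ^ ((k : ℤ) + 1)) x = T ((T ^ (k : ℤ)) x) := by
        rw [apply_eq_zpow ((T ^ (k:ℤ)) x), zp (by ring : (1 : ℤ) + k = (k : ℤ) + 1)]
      rw [this, lplus_T, ih]
  | pred k ih =>
      have : (T ^ (-(k : ℤ) - 1)) x = T.symm ((T ^ (-(k : ℤ))) x) := by
        rw [symm_apply_eq_zpow' ((T ^ (-(k:ℤ))) x),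
          zp (by ring : (-1 : ℤ) + (-(k:ℤ)) = -(k : ℤ) - 1)]
      rw [this, lplus_symm, ih]

lemma lminus_zpow (j : ℤ) (x : X) : lminus T e ((T ^ j) x) = lminus T e x := by
  induction j using Int.induction_on with
  | zero => simp
  | succ k ih =>
      have : (T ^ ((k : ℤ) + 1)) x = T ((T ^ (k : ℤ)) x) := by
        rw [apply_eq_zpow ((T ^ (k:ℤ)) x), zp (by ring : (1 : ℤ) + k = (k : ℤ) + 1)]
      rw [this, lminus_T, ih]
  | pred k ih =>
      have : (T ^ (-(k : ℤ) - 1)) x = T.symm ((T ^ (-(k : ℤ))) x) := by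
        rw [symm_apply_eq_zpow' ((T ^ (-(k:ℤ))) x),
          zp (by ring : (-1 : ℤ) + (-(k:ℤ)) = -(k : ℤ) - 1)]
      rw [this, lminus_symm, ih]

/-! ### `NN`, `ZZ`, `kap` -/

lemma NN_sub_ZZ : NN T e ⊆ ZZ T e := fun x hx => ⟨0, by simpa using hx⟩

lemma ZZ_zpow (j : ℤ) (x : X) : (T ^ j) x ∈ ZZ T e ↔ x ∈ ZZ T e := by
  constructor
  · rintro ⟨i, hi⟩
    exact ⟨i + j, by rwa [zpow_apply_add]⟩
  · rintro ⟨i, hi⟩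
    refine ⟨i - j, ?_⟩
    rwa [zp (by ring : (i - j) + j = i)]

lemma measurableSet_eq_fun_ennreal {α : Type*} [MeasurableSpace α] {f g : α → ℝ≥0∞}
    (hf : Measurable f) (hg : Measurable g) : MeasurableSet {x | f x = g x} := by
  have : {x | f x = g x} = {x | f x ≤ g x} ∩ {x | g x ≤ f x} := by
    ext x; exact le_antisymm_iff
  rw [this]
  exact (measurableSet_le hf hg).inter (measurableSet_le hg hf)

lemma measurable_NN (hem : Measurable e) (hTm : Measurable T) (hTm' : Measurable T.symm) :
    MeasurableSet (NN T e) := by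
  unfold NN
  exact MeasurableSet.union
    (measurableSet_eq_fun_ennreal (measurable_phi hem) (measurable_lplus hem hTm hTm'))
    (measurableSet_eq_fun_ennreal (measurable_phi hem) (measurable_lminus hem hTm hTm'))

lemma measurable_NNmin (hem : Measurable e) (hTm : Measurable T) (hTm' : Measurable T.symm) :
    MeasurableSet (NNmin T e) := by
  unfold NNmin
  refine (measurable_NN hem hTm hTm').inter ?_
  have : {x | ∀ j : ℤ, (T ^ j) x ∈ NN T e → phi e x ≤ phi e ((T ^ j) x)}
      = ⋂ j : ℤ, (((⇑(T ^ j)) ⁻¹' (NN T e))ᶜ ∪ {x | phi e x ≤ phi e ((T ^ j) x)}) := by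
    ext x
    simp only [mem_iInter, mem_union, mem_compl_iff, mem_preimage, mem_setOf_eq]
    constructor
    · intro h j; by_cases hj : (T ^ j) x ∈ NN T e
      · exact Or.inr (h j hj)
      · exact Or.inl hj
    · intro h j hj; rcases h j with h | h
      · exact absurd hj h
      · exact h
  rw [this]
  refine MeasurableSet.iInter fun j => MeasurableSet.union
    (((measurable_zpow T hTm hTm' j) (measurable_NN hem hTm hTm')).compl)
    (measurableSet_le (measurable_phi hem)
      ((measurable_phi hem).comp (measurable_zpow T hTm hTm' j)))

lemma measurable_ZZ (hem : Measurable e) (hTm : Measurable T) (hTm' : Measurable T.symm) :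
    MeasurableSet (ZZ T e) := by
  unfold ZZ
  have : {x : X | ∃ j : ℤ, (T ^ j) x ∈ NN T e} = ⋃ j : ℤ, (⇑(T ^ j)) ⁻¹' (NN T e) := by
    ext x; simp [mem_iUnion]
  rw [this]
  exact MeasurableSet.iUnion fun j => (measurable_zpow T hTm hTm' j) (measurable_NN hem hTm hTm')

section Aperiodic

def Hyp (T : Equiv.Perm X) : Prop := ∀ (x : X) (n : ℤ), n ≠ 0 → (T ^ n) x ≠ x

lemma NNmin_unique (hTa : Hyp T) (hei : Function.Injective e) {x : X} {i j : ℤ} (hi : (T ^ (-i)) x ∈ NNmin T e)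
    (hj : (T ^ (-j)) x ∈ NNmin T e) : i = j := by
  set y := (T ^ (-i)) x with hy
  set z := (T ^ (-j)) x with hz
  have hzy : z = (T ^ (i - j)) y := by
    rw [hy, hz, zp (by ring : (i - j) + (-i) = -j)]
  have hyz : y = (T ^ (j - i)) z := by
    rw [hy, hz, zp (by ring : (j - i) + (-j) = -i)]
  have h1 : phi e y ≤ phi e z := by
    have := hi.2 (i - j) (by rw [← hzy]; exact hj.1)
    rwa [← hzy] at this
  have h2 : phi e z ≤ phi e y := by
    have := hj.2 (j - i) (by rw [← hyz]; exact hi.1)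
    rwa [← hyz] at this
  have : y = z := phi_inj hei (le_antisymm h1 h2)
  by_contra hne
  have hij : i - j ≠ 0 := fun h => hne (by omega)
  exact hTa y (i - j) hij (by rw [← hzy, ← this])

lemma exists_NNmin {x : X} (hx : x ∈ ZZ T e) : ∃ j : ℤ, (T ^ (-j)) x ∈ NNmin T e := by
  -- any orbit point of `NN` has `phi` value `lplus x` or `lminus x`
  have hval : ∀ j : ℤ, (T ^ j) x ∈ NN T e →
      phi e ((T ^ j) x) = lplus T e x ∨ phi e ((T ^ j) x) = lminus T e x := by
    intro j hj
    rcases hj with h | h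
    · left; rwa [lplus_zpow] at h
    · right; rwa [lminus_zpow] at h
  by_cases hp : ∃ i : ℤ, phi e ((T ^ i) x) = lplus T e x
  · by_cases hm : ∃ i : ℤ, phi e ((T ^ i) x) = lminus T e x
    · -- both attained; choose the smaller value
      obtain ⟨ip, hip⟩ := hp
      obtain ⟨im, him⟩ := hm
      rcases le_total (lplus T e x) (lminus T e x) with hle | hle
      · refine ⟨-ip, ?_⟩
        rw [neg_neg]
        refine ⟨Or.inl (by rw [hip, lplus_zpow]), ?_⟩
        intro j' hj'
        have : (T ^ j') ((T ^ ip) x) = (T ^ (j' + ip)) x := by rw [zpow_apply_add]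
        rw [this] at hj' ⊢
        rcases hval _ hj' with h | h
        · rw [h, hip]
        · rw [h, hip]; exact hle
      · refine ⟨-im, ?_⟩
        rw [neg_neg]
        refine ⟨Or.inr (by rw [him, lminus_zpow]), ?_⟩
        intro j' hj'
        have : (T ^ j') ((T ^ im) x) = (T ^ (j' + im)) x := by rw [zpow_apply_add]
        rw [this] at hj' ⊢
        rcases hval _ hj' with h | h
        · rw [h, him]; exact hle
        · rw [h, him]
    · -- only `lplus` attained
      obtain ⟨ip, hip⟩ := hp
      refine ⟨-ip, ?_⟩
      rw [neg_neg]
      refine ⟨Or.inl (by rw [hip, lplus_zpow]), ?_⟩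
      intro j' hj'
      have heq : (T ^ j') ((T ^ ip) x) = (T ^ (j' + ip)) x := by rw [zpow_apply_add]
      rw [heq] at hj' ⊢
      rcases hval _ hj' with h | h
      · rw [h, hip]
      · exact absurd ⟨j' + ip, h⟩ hm
  · by_cases hm : ∃ i : ℤ, phi e ((T ^ i) x) = lminus T e x
    · obtain ⟨im, him⟩ := hm
      refine ⟨-im, ?_⟩
      rw [neg_neg]
      refine ⟨Or.inr (by rw [him, lminus_zpow]), ?_⟩
      intro j' hj'
      have heq : (T ^ j') ((T ^ im) x) = (T ^ (j' + im)) x := by rw [zpow_apply_add]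
      rw [heq] at hj' ⊢
      rcases hval _ hj' with h | h
      · exact absurd ⟨j' + im, h⟩ hp
      · rw [h, him]
    · obtain ⟨j₀, hj₀⟩ := hx
      rcases hval j₀ hj₀ with h | h
      · exact absurd ⟨j₀, h⟩ hp
      · exact absurd ⟨j₀, h⟩ hm

lemma kap_spec (hTa : Hyp T) (hei : Function.Injective e) {x : X} {j : ℤ} (hj : (T ^ (-j)) x ∈ NNmin T e) : kap T e x = j := by
  have h : ∃ i : ℤ, (T ^ (-i)) x ∈ NNmin T e := ⟨j, hj⟩
  rw [kap, dif_pos h]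
  exact NNmin_unique hTa hei h.choose_spec hj

lemma kap_self (hTa : Hyp T) (hei : Function.Injective e) {x : X} (hx : x ∈ ZZ T e) : (T ^ (-(kap T e x))) x ∈ NNmin T e := by
  obtain ⟨j, hj⟩ := exists_NNmin hx
  rwa [kap_spec hTa hei hj]

lemma kap_add (hTa : Hyp T) (hei : Function.Injective e) {x : X} (hx : x ∈ ZZ T e) (m : ℤ) :
    kap T e ((T ^ m) x) = kap T e x + m := by
  apply kap_spec hTa hei
  rw [zp (by ring : (-(kap T e x + m)) + m = -(kap T e x))]
  exact kap_self hTa hei hx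

lemma measurable_kap (hTa : Hyp T) (hei : Function.Injective e) (hem : Measurable e) (hTm : Measurable T) (hTm' : Measurable T.symm) :
    Measurable (kap T e) := by
  apply measurable_to_countable'
  intro j
  have : kap T e ⁻¹' {j} = ((⇑(T ^ (-j))) ⁻¹' (NNmin T e)) ∪
      ((⋂ i : ℤ, ((⇑(T ^ (-i))) ⁻¹' (NNmin T e))ᶜ) ∩ {x : X | j = 0}) := by
    ext x
    simp only [mem_preimage, mem_singleton_iff, mem_union, mem_inter_iff, mem_iInter,
      mem_compl_iff, mem_setOf_eq]
    constructor
    · intro h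
      by_cases hex : ∃ i : ℤ, (T ^ (-i)) x ∈ NNmin T e
      · left
        have := kap_spec hTa hei hex.choose_spec
        rw [← h, this]
        exact hex.choose_spec
      · right
        push_neg at hex
        refine ⟨fun i => hex i, ?_⟩
        rw [← h, kap, dif_neg (by push_neg; exact hex)]
    · rintro (h | ⟨hall, hj⟩)
      · exact kap_spec hTa hei h
      · rw [kap, dif_neg (by push_neg; exact hall), hj]
  rw [this]
  refine MeasurableSet.union ((measurable_zpow T hTm hTm' _) (measurable_NNmin hem hTm hTm')) ?_
  refine MeasurableSet.inter (MeasurableSet.iInter fun i =>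
    ((measurable_zpow T hTm hTm' _) (measurable_NNmin hem hTm hTm')).compl) ?_
  by_cases hj : j = 0
  · simp [hj]
  · simp [hj]

end Aperiodic

/-! ### properties of the marker sets `MM` -/

lemma eps_anti {k l : ℕ} (h : k ≤ l) : (2⁻¹ : ℝ≥0∞) ^ l ≤ (2⁻¹ : ℝ≥0∞) ^ k :=
  pow_le_pow_right_of_le_one' (by simp) h

lemma eps_ne_zero (k : ℕ) : (2⁻¹ : ℝ≥0∞) ^ k ≠ 0 :=
  pow_ne_zero _ (ENNReal.inv_ne_zero.mpr (by norm_num))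

lemma eps_ne_top (k : ℕ) : (2⁻¹ : ℝ≥0∞) ^ k ≠ ⊤ :=
  ENNReal.pow_ne_top (ENNReal.inv_ne_top.mpr (by norm_num))

lemma MM_antitone : Antitone (MM T e) := by
  apply antitone_nat_of_succ_le
  intro k
  cases k with
  | zero => exact fun x _ => mem_univ x
  | succ m =>
      rintro x (⟨h1, h2, h3⟩ | ⟨h1, h2⟩)
      · exact Or.inl ⟨h1, dvd_trans (pow_dvd_pow 2 (by omega)) h2, h3⟩
      · refine Or.inr ⟨h1, ?_⟩
        have he : (2⁻¹ : ℝ≥0∞) ^ (m+2) ≤ (2⁻¹ : ℝ≥0∞) ^ (m+1) := eps_anti (by omega)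
        rcases h2 with ⟨ha, hb⟩ | ⟨ha, hb⟩
        · exact Or.inl ⟨lt_of_lt_of_le ha (add_le_add_right he _),
            lt_of_lt_of_le hb (add_le_add_right he _)⟩
        · exact Or.inr ⟨lt_of_lt_of_le ha (add_le_add_right he _),
            lt_of_lt_of_le hb (add_le_add_right he _)⟩

lemma measurable_MM (hTa : Hyp T) (hei : Function.Injective e) (hem : Measurable e)
    (hTm : Measurable T) (hTm' : Measurable T.symm) (k : ℕ) :
    MeasurableSet (MM T e k) := by
  cases k with
  | zero => exact MeasurableSet.univ
  | succ m =>
      refine MeasurableSet.union ?_ ?_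
      · refine (measurable_ZZ hem hTm hTm').inter ?_
        have : {x | ((2:ℤ)^(m+1)) ∣ kap T e x ∧ kap T e x ≠ 0}
            = kap T e ⁻¹' {j : ℤ | ((2:ℤ)^(m+1)) ∣ j ∧ j ≠ 0} := rfl
        rw [this]
        exact (measurable_kap hTa hei hem hTm hTm') (by trivial)
      · refine (measurable_ZZ hem hTm hTm').compl.inter (MeasurableSet.union ?_ ?_)
        · exact (measurableSet_lt (measurable_phi hem)
              ((measurable_lplus hem hTm hTm').add measurable_const)).inter
            (measurableSet_lt (α := ℝ≥0∞) (measurable_lplus hem hTm hTm')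
              ((measurable_phi hem).add measurable_const))
        · exact (measurableSet_lt (measurable_phi hem)
              ((measurable_lminus hem hTm hTm').add measurable_const)).inter
            (measurableSet_lt (α := ℝ≥0∞) (measurable_lminus hem hTm hTm')
              ((measurable_phi hem).add measurable_const))

/-- near-liminf recurrence for `ℝ≥0∞`-valued sequences -/
lemma liminf_freq (u : ℕ → ℝ≥0∞) (hu0 : ∀ n, u n ≠ 0) (hL : liminf u atTop ≠ ⊤)
    {ε : ℝ≥0∞} (hε0 : ε ≠ 0) (hεtop : ε ≠ ⊤) (m : ℕ) :
    ∃ n, m ≤ n ∧ u n < liminf u atTop + ε ∧ liminf u atTop < u n + ε := by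
  have E2 : ∃ᶠ n in atTop, u n < liminf u atTop + ε :=
    frequently_lt_of_liminf_lt (h := ENNReal.lt_add_right hL hε0)
  have E1 : ∀ᶠ n in atTop, liminf u atTop < u n + ε := by
    by_cases hLε : liminf u atTop ≤ ε
    · refine Eventually.of_forall fun n => lt_of_le_of_lt hLε ?_
      calc ε < ε + u n := ENNReal.lt_add_right hεtop (hu0 n)
        _ = u n + ε := add_comm _ _
    · push_neg at hLε
      have hL0 : liminf u atTop ≠ 0 := by
        intro h0
        rw [h0] at hLε
        exact (not_lt_of_ge (zero_le : 0 ≤ ε)) hLε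
      have hb : liminf u atTop - ε < liminf u atTop :=
        ENNReal.sub_lt_self hL hL0 hε0
      refine (eventually_lt_of_lt_liminf hb).mono fun n hn => ?_
      have h2 : (liminf u atTop - ε) + ε < u n + ε := ENNReal.add_lt_add_right hεtop hn
      rwa [tsub_add_cancel_of_le hLε.le] at h2
  have := E1.and_frequently E2
  rw [frequently_atTop] at this
  obtain ⟨n, hn, h1, h2⟩ := this m
  exact ⟨n, hn, h2, h1⟩

lemma MM_rec_fwd (hTa : Hyp T) (hei : Function.Injective e) (k : ℕ) (x : X) :
    ∃ n : ℕ, 1 ≤ n ∧ (T ^ (n : ℤ)) x ∈ MM T e k := by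
  cases k with
  | zero => exact ⟨1, le_refl 1, mem_univ _⟩
  | succ m =>
      by_cases hZ : x ∈ ZZ T e
      · set K := kap T e x with hK
        set A : ℤ := (K.natAbs : ℤ) with hA
        set B : ℤ := 2 ^ (m+1) with hB
        have hB2 : (2:ℤ) ≤ B := by
          rw [hB]
          calc (2:ℤ) = 2^1 := by norm_num
            _ ≤ 2^(m+1) := pow_le_pow_right₀ (by norm_num) (by omega)
        have hBA : 2*(A+1) ≤ B*(A+1) := by
          have hA0 : (0:ℤ) ≤ A := by positivity
          nlinarith
        have hKA : K ≤ A ∧ -A ≤ K := by omega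
        set mz : ℤ := B*(A+1) - K with hmz
        have hm1 : 1 ≤ mz := by omega
        refine ⟨mz.toNat, by omega, ?_⟩
        have hcast : ((mz.toNat : ℤ)) = mz := Int.toNat_of_nonneg (by omega)
        rw [hcast]
        refine Or.inl ⟨(ZZ_zpow mz x).mpr hZ, ?_, ?_⟩
        · rw [kap_add hTa hei hZ, ← hK]
          have : K + mz = B*(A+1) := by omega
          rw [this]
          exact dvd_mul_right _ _
        · rw [kap_add hTa hei hZ, ← hK]
          have hA0 : (0:ℤ) ≤ A := by positivity
          omega
      · obtain ⟨n, hn, h1, h2⟩ := liminf_freq (fun n : ℕ => phi e ((T ^ (n:ℤ)) x))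
          (fun n => phi_pos _) (lplus_ne_top x) (eps_ne_zero (m+1)) (eps_ne_top (m+1)) 1
        refine ⟨n, hn, Or.inr ⟨?_, Or.inl ⟨?_, ?_⟩⟩⟩
        · intro hmem
          exact hZ ((ZZ_zpow (n:ℤ) x).mp hmem)
        · rw [lplus_zpow]
          exact h1
        · rw [lplus_zpow]
          exact h2

lemma MM_rec_bwd (hTa : Hyp T) (hei : Function.Injective e) (k : ℕ) (x : X) :
    ∃ n : ℕ, 1 ≤ n ∧ (T ^ (-(n : ℤ))) x ∈ MM T e k := by
  cases k with
  | zero => exact ⟨1, le_refl 1, mem_univ _⟩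
  | succ m =>
      by_cases hZ : x ∈ ZZ T e
      · set K := kap T e x with hK
        set A : ℤ := (K.natAbs : ℤ) with hA
        set B : ℤ := 2 ^ (m+1) with hB
        have hB2 : (2:ℤ) ≤ B := by
          rw [hB]
          calc (2:ℤ) = 2^1 := by norm_num
            _ ≤ 2^(m+1) := pow_le_pow_right₀ (by norm_num) (by omega)
        have hBA : 2*(A+1) ≤ B*(A+1) := by
          have hA0 : (0:ℤ) ≤ A := by positivity
          nlinarith
        set mz : ℤ := B*(A+1) + K with hmz
        have hm1 : 1 ≤ mz := by omega
        refine ⟨mz.toNat, by omega, ?_⟩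
        have hcast : ((mz.toNat : ℤ)) = mz := Int.toNat_of_nonneg (by omega)
        rw [hcast]
        refine Or.inl ⟨(ZZ_zpow (-mz) x).mpr hZ, ?_, ?_⟩
        · rw [kap_add hTa hei hZ, ← hK]
          have : K + (-mz) = -(B*(A+1)) := by omega
          rw [this]
          exact (dvd_mul_right _ _).neg_right
        · rw [kap_add hTa hei hZ, ← hK]
          have hA0 : (0:ℤ) ≤ A := by positivity
          omega
      · obtain ⟨n, hn, h1, h2⟩ := liminf_freq (fun n : ℕ => phi e ((T ^ (-(n:ℤ))) x))
          (fun n => phi_pos _) (lminus_ne_top x) (eps_ne_zero (m+1)) (eps_ne_top (m+1)) 1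
        refine ⟨n, hn, Or.inr ⟨?_, Or.inr ⟨?_, ?_⟩⟩⟩
        · intro hmem
          exact hZ ((ZZ_zpow (-(n:ℤ)) x).mp hmem)
        · rw [lminus_zpow]
          exact h1
        · rw [lminus_zpow]
          exact h2

lemma forall_or_antitone (P Q : ℕ → Prop)
    (hP : ∀ {k l : ℕ}, k ≤ l → P l → P k) (hQ : ∀ {k l : ℕ}, k ≤ l → Q l → Q k)
    (h : ∀ k, P k ∨ Q k) : (∀ k, P k) ∨ (∀ k, Q k) := by
  by_cases hp : ∀ k, P k
  · exact Or.inl hp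
  · push_neg at hp
    obtain ⟨k₀, hk₀⟩ := hp
    refine Or.inr fun k => ?_
    rcases h (max k k₀) with h1 | h1
    · exact absurd (hP (le_max_right _ _) h1) hk₀
    · exact hQ (le_max_left _ _) h1

lemma le_of_forall_lt_add_eps {a b : ℝ≥0∞} (hb : b ≠ ⊤)
    (h : ∀ k : ℕ, a < b + (2⁻¹ : ℝ≥0∞) ^ (k+1)) : a ≤ b := by
  refine ENNReal.le_of_forall_pos_le_add fun δ hδ _ => ?_
  obtain ⟨k, hk⟩ := ENNReal.exists_inv_two_pow_lt (a := (δ : ℝ≥0∞))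
    (by exact_mod_cast hδ.ne')
  refine le_trans (h k).le (add_le_add_right ?_ b)
  exact le_trans (eps_anti (by omega : k ≤ k + 1)) hk.le

lemma MM_exists_not (hTa : Hyp T) (hei : Function.Injective e) (x : X) :
    ∃ k : ℕ, x ∉ MM T e (k+1) := by
  by_contra hco
  push_neg at hco
  by_cases hZ : x ∈ ZZ T e
  · have hk : ∀ k : ℕ, ((2:ℤ)^(k+1) ∣ kap T e x) ∧ kap T e x ≠ 0 := by
      intro k
      rcases hco k with h | h
      · exact h.2
      · exact absurd hZ h.1
    set K := kap T e x with hK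
    have hKne : K ≠ 0 := (hk 0).2
    set m := K.natAbs with hm
    have h1 : (2:ℤ)^(m+1) ≤ (m:ℤ) :=
      Int.le_of_dvd (by omega) (Int.dvd_natAbs.mpr (hk m).1)
    have h1' : (2:ℕ)^(m+1) ≤ m := by exact_mod_cast h1
    have h2 : m < 2^m := Nat.lt_two_pow_self
    have h4 : (2:ℕ)^m ≤ 2^(m+1) := Nat.pow_le_pow_right (by norm_num) (by omega)
    omega
  · have hPQ : ∀ k : ℕ,
        (phi e x < lplus T e x + (2⁻¹:ℝ≥0∞)^(k+1) ∧ lplus T e x < phi e x + (2⁻¹:ℝ≥0∞)^(k+1)) ∨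
        (phi e x < lminus T e x + (2⁻¹:ℝ≥0∞)^(k+1) ∧
          lminus T e x < phi e x + (2⁻¹:ℝ≥0∞)^(k+1)) := by
      intro k
      rcases hco k with h | h
      · exact absurd h.1 hZ
      · exact h.2
    have antilem : ∀ (a b : ℝ≥0∞) {k l : ℕ}, k ≤ l →
        (a < b + (2⁻¹:ℝ≥0∞)^(l+1) ∧ b < a + (2⁻¹:ℝ≥0∞)^(l+1)) →
        (a < b + (2⁻¹:ℝ≥0∞)^(k+1) ∧ b < a + (2⁻¹:ℝ≥0∞)^(k+1)) := by
      intro a b k l hkl h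
      have he : (2⁻¹:ℝ≥0∞)^(l+1) ≤ (2⁻¹:ℝ≥0∞)^(k+1) := eps_anti (by omega)
      exact ⟨lt_of_lt_of_le h.1 (add_le_add_right he _),
        lt_of_lt_of_le h.2 (add_le_add_right he _)⟩
    rcases forall_or_antitone _ _ (fun hkl h => antilem _ _ hkl h)
        (fun hkl h => antilem _ _ hkl h) hPQ with hall | hall
    · have h1 : phi e x ≤ lplus T e x :=
        le_of_forall_lt_add_eps (lplus_ne_top x) fun k => (hall k).1
      have h2 : lplus T e x ≤ phi e x :=
        le_of_forall_lt_add_eps (phi_ne_top x) fun k => (hall k).2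
      exact hZ (NN_sub_ZZ (Or.inl (le_antisymm h1 h2)))
    · have h1 : phi e x ≤ lminus T e x :=
        le_of_forall_lt_add_eps (lminus_ne_top x) fun k => (hall k).1
      have h2 : lminus T e x ≤ phi e x :=
        le_of_forall_lt_add_eps (phi_ne_top x) fun k => (hall k).2
      exact hZ (NN_sub_ZZ (Or.inr (le_antisymm h1 h2)))

/-! ### the level function and the profile `rho` -/

variable (T e) in
noncomputable def lev (x : X) : ℕ :=
  if h : ∃ k : ℕ, x ∉ MM T e (k+1) then Nat.find h else 0

variable (T e) in
noncomputable def rho (x : X) : ℝ :=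
  1 - (2⁻¹:ℝ)^(lev T e x) + (2⁻¹:ℝ)^(lev T e x + 1) * psi e x

variable (T e) in
def CC (t : ℝ) : Set X := {x | t ≤ rho T e x}

lemma lev_spec (hTa : Hyp T) (hei : Function.Injective e) (x : X) :
    x ∉ MM T e (lev T e x + 1) := by
  rw [lev, dif_pos (MM_exists_not hTa hei x)]
  exact Nat.find_spec (MM_exists_not hTa hei x)

lemma lev_min (hTa : Hyp T) (hei : Function.Injective e) {x : X} {m : ℕ}
    (hm : m < lev T e x) : x ∈ MM T e (m+1) := by
  rw [lev, dif_pos (MM_exists_not hTa hei x)] at hm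
  exact not_not.mp (Nat.find_min (MM_exists_not hTa hei x) hm)

lemma lev_mem (hTa : Hyp T) (hei : Function.Injective e) (x : X) :
    x ∈ MM T e (lev T e x) := by
  rcases Nat.eq_zero_or_pos (lev T e x) with h | h
  · rw [h]; exact mem_univ x
  · obtain ⟨m, hm⟩ : ∃ m, lev T e x = m + 1 := ⟨lev T e x - 1, by omega⟩
    rw [hm]
    exact lev_min hTa hei (by omega)

lemma le_lev (hTa : Hyp T) (hei : Function.Injective e) {x : X} {k : ℕ}
    (hx : x ∈ MM T e k) : k ≤ lev T e x := by
  by_contra h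
  push_neg at h
  exact lev_spec hTa hei x (MM_antitone (by omega : lev T e x + 1 ≤ k) hx)

lemma measurable_discrete_comp {β : Type*} [MeasurableSpace β] {g : X → ℕ} (hg : Measurable g)
    (u : ℕ → β) : Measurable (fun x => u (g x)) := by
  have : (fun x => u (g x)) = u ∘ g := rfl
  rw [this]
  exact Measurable.comp (by exact measurable_from_top) hg

lemma measurable_lev (hTa : Hyp T) (hei : Function.Injective e) (hem : Measurable e)
    (hTm : Measurable T) (hTm' : Measurable T.symm) : Measurable (lev T e) := by
  apply measurable_to_countable'
  intro n
  have : lev T e ⁻¹' {n} = (MM T e (n+1))ᶜ ∩ ⋂ m ∈ Finset.range n, MM T e (m+1) := by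
    ext x
    simp only [mem_preimage, mem_singleton_iff, mem_inter_iff, mem_compl_iff, mem_iInter,
      Finset.mem_range]
    constructor
    · intro h
      exact ⟨h ▸ lev_spec hTa hei x, fun m hm => lev_min hTa hei (by omega)⟩
    · rintro ⟨h1, h2⟩
      have hle : lev T e x ≤ n := by
        by_contra hc
        push_neg at hc
        exact h1 (lev_min hTa hei hc)
      rcases lt_or_eq_of_le hle with h3 | h3
      · exact absurd (lev_spec hTa hei x) (not_not.mpr (h2 _ h3))
      · exact h3
  rw [this]
  exact (measurable_MM hTa hei hem hTm hTm' _).compl.inter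
    (MeasurableSet.biInter (to_countable _) fun m _ => measurable_MM hTa hei hem hTm hTm' _)

lemma measurable_rho (hTa : Hyp T) (hei : Function.Injective e) (hem : Measurable e)
    (hTm : Measurable T) (hTm' : Measurable T.symm) : Measurable (rho T e) := by
  unfold rho
  exact ((measurable_const.sub
      (measurable_discrete_comp (measurable_lev hTa hei hem hTm hTm') (fun n => (2⁻¹:ℝ)^n))).add
    ((measurable_discrete_comp (measurable_lev hTa hei hem hTm hTm')
      (fun n => (2⁻¹:ℝ)^(n+1))).mul (measurable_psi hem)))

lemma rho_gt (x : X) : 1 - (2⁻¹:ℝ)^(lev T e x) < rho T e x := by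
  unfold rho
  have h1 : (0:ℝ) < (2⁻¹:ℝ)^(lev T e x + 1) := by positivity
  nlinarith [(psi_mem_Ioo (e := e) x).1]

lemma rho_lt (x : X) : rho T e x < 1 - (2⁻¹:ℝ)^(lev T e x + 1) := by
  unfold rho
  have h1 : (0:ℝ) < (2⁻¹:ℝ)^(lev T e x + 1) := by positivity
  have h2 : (2⁻¹:ℝ)^(lev T e x + 1) = (2⁻¹:ℝ)^(lev T e x) * 2⁻¹ := pow_succ _ _
  nlinarith [(psi_mem_Ioo (e := e) x).2]

lemma rho_pos (x : X) : 0 < rho T e x := by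
  have h1 : (2⁻¹:ℝ)^(lev T e x) ≤ 1 := pow_le_one₀ (by norm_num) (by norm_num)
  have := rho_gt (T := T) (e := e) x
  linarith

lemma rho_lt_one (x : X) : rho T e x < 1 := by
  have h1 : (0:ℝ) < (2⁻¹:ℝ)^(lev T e x + 1) := by positivity
  have := rho_lt (T := T) (e := e) x
  linarith

lemma rho_inj (hTa : Hyp T) (hei : Function.Injective e) :
    Function.Injective (rho T e) := by
  intro x y h
  have hlev : lev T e x = lev T e y := by
    by_contra hne
    rcases Nat.lt_or_ge (lev T e x) (lev T e y) with hlt | hge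
    · have h1 : rho T e x < 1 - (2⁻¹:ℝ)^(lev T e x + 1) := rho_lt x
      have h2 : 1 - (2⁻¹:ℝ)^(lev T e y) < rho T e y := rho_gt y
      have h3 : (2⁻¹:ℝ)^(lev T e y) ≤ (2⁻¹:ℝ)^(lev T e x + 1) :=
        pow_le_pow_of_le_one (by norm_num) (by norm_num) (by omega)
      linarith
    · have hlt : lev T e y < lev T e x := by omega
      have h1 : rho T e y < 1 - (2⁻¹:ℝ)^(lev T e y + 1) := rho_lt y
      have h2 : 1 - (2⁻¹:ℝ)^(lev T e x) < rho T e x := rho_gt x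
      have h3 : (2⁻¹:ℝ)^(lev T e x) ≤ (2⁻¹:ℝ)^(lev T e y + 1) :=
        pow_le_pow_of_le_one (by norm_num) (by norm_num) (by omega)
      linarith
  unfold rho at h
  rw [hlev] at h
  have hpow : (0:ℝ) < (2⁻¹:ℝ)^(lev T e y + 1) := by positivity
  have : psi e x = psi e y := by
    have := mul_left_cancel₀ (ne_of_gt hpow) (by linarith : (2⁻¹:ℝ)^(lev T e y + 1) * psi e x = (2⁻¹:ℝ)^(lev T e y + 1) * psi e y)
    exact this
  exact psi_inj hei this

lemma measurable_CC (hTa : Hyp T) (hei : Function.Injective e) (hem : Measurable e)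
    (hTm : Measurable T) (hTm' : Measurable T.symm) (t : ℝ) :
    MeasurableSet (CC T e t) :=
  measurableSet_le measurable_const (measurable_rho hTa hei hem hTm hTm')

lemma CC_anti {s t : ℝ} (h : s ≤ t) : CC T e t ⊆ CC T e s :=
  fun x hx => le_trans h hx

lemma CC_univ {t : ℝ} (ht : t ≤ 0) : CC T e t = univ := by
  ext x
  simp only [CC, mem_setOf_eq, mem_univ, iff_true]
  exact le_trans ht (rho_pos x).le

lemma MM_sub_CC (hTa : Hyp T) (hei : Function.Injective e) (k : ℕ) :
    MM T e k ⊆ CC T e (1 - (2⁻¹:ℝ)^k) := by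
  intro x hx
  have h1 : k ≤ lev T e x := le_lev hTa hei hx
  have h2 : (2⁻¹:ℝ)^(lev T e x) ≤ (2⁻¹:ℝ)^k :=
    pow_le_pow_of_le_one (by norm_num) (by norm_num) h1
  have := rho_gt (T := T) (e := e) x
  show 1 - (2⁻¹:ℝ)^k ≤ rho T e x
  linarith

lemma CC_sub_rho {t : ℝ} : CC T e t ⊆ {x | t ≤ rho T e x} := fun x hx => hx

lemma exists_MM_sub_CC (hTa : Hyp T) (hei : Function.Injective e) {t : ℝ} (ht : t < 1) :
    ∃ k : ℕ, MM T e k ⊆ CC T e t := by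
  obtain ⟨k, hk⟩ := exists_pow_lt_of_lt_one (by linarith : (0:ℝ) < 1 - t)
    (by norm_num : (2⁻¹:ℝ) < 1)
  exact ⟨k, (MM_sub_CC hTa hei k).trans (CC_anti (by linarith))⟩

lemma CC_cutF (hTa : Hyp T) (hei : Function.Injective e) {t : ℝ} (ht : t < 1) :
    ∀ x : X, ∃ n : ℕ, (T ^ ((n : ℤ) + 1)) x ∈ CC T e t := by
  intro x
  obtain ⟨k, hk⟩ := exists_MM_sub_CC hTa hei ht
  obtain ⟨n, hn1, hn2⟩ := MM_rec_fwd hTa hei k x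
  refine ⟨n - 1, ?_⟩
  have : (((n - 1 : ℕ) : ℤ) + 1) = (n : ℤ) := by omega
  rw [this]
  exact hk hn2

lemma CC_cutB (hTa : Hyp T) (hei : Function.Injective e) {t : ℝ} (ht : t < 1) :
    ∀ x : X, ∃ n : ℕ, (T ^ (-(n : ℤ))) x ∈ CC T e t := by
  intro x
  obtain ⟨k, hk⟩ := exists_MM_sub_CC hTa hei ht
  obtain ⟨n, hn1, hn2⟩ := MM_rec_bwd hTa hei k x
  exact ⟨n, hk hn2⟩


end Markers

section Assemble

variable {X : Type*} [MeasurableSpace X]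
variable {T : Equiv.Perm X} {e : X → ℝ}

lemma Eset_self (S : Equiv.Perm X) : Eset S S = ∅ := by
  unfold Eset
  simp

lemma cutPerm_eq_one {C : Set X} (hf : CutF T C) (hb : CutB T C) (hC : C = univ) :
    cutPerm T C hf hb = 1 := by
  subst hC
  exact cutPerm_univ hf hb

/-- difference of two cut permutations at parameters `s, t ≤ u` is controlled by
the `u`-blocks meeting `{min s t ≤ rho < max s t}`. -/
lemma Eset_cut_cut_bound {s t u : ℝ}
    (hfs : CutF T (CC T e s)) (hbs : CutB T (CC T e s))
    (hft : CutF T (CC T e t)) (hbt : CutB T (CC T e t))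
    (hfu : CutF T (CC T e u)) (hbu : CutB T (CC T e u))
    (hsu : s ≤ u) (htu : t ≤ u) :
    Eset (cutPerm T (CC T e s) hfs hbs) (cutPerm T (CC T e t) hft hbt)
      ⊆ Wset T (CC T e u) {x | min s t ≤ rho T e x ∧ rho T e x < max s t} := by
  rcases le_total s t with hst | hst
  · refine (Eset_cut_subset (CC_anti hst) hfs hbs hft hbt).trans ?_
    refine subset_trans (Wset_anti (T := T) hbt hft hbu hfu (CC_anti htu)) ?_
    refine Wset_mono fun x hx => ?_
    rcases hx with ⟨hx1, hx2⟩
    have hx2' : rho T e x < t := not_le.mp hx2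
    exact ⟨le_trans (min_le_left _ _) hx1, lt_of_lt_of_le hx2' (le_max_right _ _)⟩
  · rw [Eset_symm]
    refine (Eset_cut_subset (CC_anti hst) hft hbt hfs hbs).trans ?_
    refine subset_trans (Wset_anti (T := T) hbs hfs hbu hfu (CC_anti hsu)) ?_
    refine Wset_mono fun x hx => ?_
    rcases hx with ⟨hx1, hx2⟩
    have hx2' : rho T e x < s := not_le.mp hx2
    exact ⟨le_trans (min_le_right _ _) hx1, lt_of_lt_of_le hx2' (le_max_left _ _)⟩

lemma Eset_cut_T_bound {t b : ℝ}
    (hft : CutF T (CC T e t)) (hbt : CutB T (CC T e t)) (hb : b ≤ t) :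
    Eset (cutPerm T (CC T e t) hft hbt) T
      ⊆ {x | b ≤ rho T e x} ∪ (⇑T) ⁻¹' {x | b ≤ rho T e x} := by
  refine (Eset_cut_T hft hbt).trans ?_
  have hsub : CC T e t ⊆ {x | b ≤ rho T e x} := fun x hx => le_trans hb hx
  intro x hx
  rcases hx with hx | hx
  · exact Or.inr (hsub hx)
  · exact Or.inl (hsub hx)

lemma rho_fiber_subsingleton (hTa : Hyp T) (hei : Function.Injective e) (c : ℝ) :
    ({x : X | rho T e x = c}).Subsingleton := by
  intro a ha b hb
  exact rho_inj hTa hei (ha.trans hb.symm)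

lemma countable_orbit_preimage {P : Set X} (hP : P.Subsingleton) :
    (⋃ i : ℤ, (⇑(T ^ i)) ⁻¹' P).Countable :=
  countable_iUnion fun i => ((hP.preimage (T ^ i).injective)).countable

end Assemble

end APBA


open APBA

/-- an aperiodic automorphism is connected to the identity by a
path of periodic automorphisms lying in its full group, continuous against
all non-atomic measures. -/
theorem aperiodic_path_connected {X : Type*} [MeasurableSpace X]
    [StandardBorelSpace X] [Uncountable X]
    (T : Equiv.Perm X) (hT : IsBorelAuto T) (hTa : IsAperiodic T) :
    ∃ f : Set.Icc (0 : ℝ) 1 → Equiv.Perm X,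
      (∀ t, IsBorelAuto (f t)) ∧
      f ⟨0, by norm_num⟩ = 1 ∧ f ⟨1, by norm_num⟩ = T ∧
      (∀ t (x : X), ∃ n : ℤ, f t x = (T ^ n) x) ∧
      (∀ t : Set.Icc (0 : ℝ) 1, (t : ℝ) < 1 → IsPeriodicAuto (f t)) ∧
      ∀ (μ : Measure X), IsProbabilityMeasure μ → (∀ x : X, μ {x} = 0) →
        ∀ t₀ : Set.Icc (0 : ℝ) 1,
          Filter.Tendsto (fun t => μ (Eset (f t) (f t₀))) (nhds t₀) (nhds 0) := by
  classical
  obtain ⟨e, he⟩ := MeasureTheory.exists_measurableEmbedding_real X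
  have hei : Function.Injective e := he.injective
  have hem : Measurable e := he.measurable
  have hTm : Measurable ⇑T := hT.1
  have hTm' : Measurable ⇑T.symm := hT.2
  have hTa' : Hyp T := hTa
  have hrho : Measurable (rho T e) := measurable_rho hTa' hei hem hTm hTm'
  refine ⟨fun t => if h : (t : ℝ) < 1 then
      cutPerm T (CC T e (t : ℝ)) (CC_cutF hTa' hei h) (CC_cutB hTa' hei h)
    else T, ?_, ?_, ?_, ?_, ?_, ?_⟩
  · -- Borel automorphisms
    intro t
    by_cases h : (t : ℝ) < 1
    · beta_reduce
      rw [dif_pos h]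
      exact cutPerm_measurable hTm hTm' (measurable_CC hTa' hei hem hTm hTm' _) _ _
    · beta_reduce
      rw [dif_neg h]
      exact hT
  · -- value at 0
    beta_reduce
    have h0 : ((⟨0, by norm_num⟩ : Set.Icc (0:ℝ) 1) : ℝ) < 1 := by norm_num
    rw [dif_pos h0]
    exact cutPerm_eq_one _ _ (CC_univ (by norm_num))
  · -- value at 1
    beta_reduce
    have h1 : ¬ (((⟨1, by norm_num⟩ : Set.Icc (0:ℝ) 1) : ℝ) < 1) := by norm_num
    rw [dif_neg h1]
  · -- full group
    intro t x
    by_cases h : (t : ℝ) < 1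
    · beta_reduce
      rw [dif_pos h]
      exact ⟨cutσ T (CC T e (t : ℝ)) x, rfl⟩
    · beta_reduce
      rw [dif_neg h]
      exact ⟨1, apply_eq_zpow x⟩
  · -- periodicity below 1
    intro t ht
    beta_reduce
    rw [dif_pos ht]
    exact fun x => cutPerm_periodic _ _ x
  · -- continuity in measure
    intro μ hμP hμ0 t₀
    haveI : IsProbabilityMeasure μ := hμP
    haveI : NoAtoms μ := ⟨hμ0⟩
    rw [ENNReal.tendsto_nhds_zero]
    intro ε hε
    by_cases h1 : (t₀ : ℝ) < 1
    · -- interior point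
      set u : ℝ := ((t₀ : ℝ) + 1) / 2 with hu
      have ht₀0 : (0:ℝ) ≤ (t₀ : ℝ) := t₀.2.1
      have hu1 : u < 1 := by rw [hu]; linarith
      have ht₀u : (t₀ : ℝ) ≤ u := by rw [hu]; linarith
      set D : ℕ → Set X := fun n =>
        {x | (t₀:ℝ) - 1/(n+1) ≤ rho T e x ∧ rho T e x < (t₀:ℝ) + 1/(n+1)} with hD
      set H : ℕ → Set X := fun n => Wset T (CC T e u) (D n) with hH
      have hDanti : Antitone D := by
        intro m n hmn x hx
        have hfrac : 1/((n:ℝ)+1) ≤ 1/((m:ℝ)+1) := by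
          apply one_div_le_one_div_of_le
          · positivity
          · exact_mod_cast Nat.succ_le_succ hmn
        exact ⟨by linarith [hx.1], by linarith [hx.2]⟩
      have hHanti : Antitone H := fun m n hmn => Wset_mono (hDanti hmn)
      have hDmeas : ∀ n, MeasurableSet (D n) := fun n =>
        (measurableSet_le measurable_const hrho).inter
          (measurableSet_lt hrho measurable_const)
      have hHmeas : ∀ n, MeasurableSet (H n) := fun n =>
        measurable_Wset hTm hTm' (measurable_CC hTa' hei hem hTm hTm' u) (hDmeas n)
          (CC_cutB hTa' hei hu1) (CC_cutF hTa' hei hu1)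
      have hDint : (⋂ n, D n) ⊆ {x | rho T e x = (t₀:ℝ)} := by
        intro x hx
        rw [mem_iInter] at hx
        have hle : rho T e x ≤ (t₀:ℝ) := by
          by_contra hc
          push_neg at hc
          obtain ⟨n, hn⟩ := exists_nat_one_div_lt (by linarith : (0:ℝ) < rho T e x - t₀)
          have := (hx n).2
          linarith
        have hge : (t₀:ℝ) ≤ rho T e x := by
          by_contra hc
          push_neg at hc
          obtain ⟨n, hn⟩ := exists_nat_one_div_lt (by linarith : (0:ℝ) < (t₀:ℝ) - rho T e x)
          have := (hx n).1
          linarith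
        exact le_antisymm hle hge
      have hInt : (⋂ n, H n) ⊆ ⋃ i : ℤ, (⇑(T ^ i)) ⁻¹' {x | rho T e x = (t₀:ℝ)} :=
        (iInter_Wset D hDanti).trans (iUnion_mono fun i => preimage_mono hDint)
      have hμcnt : μ (⋃ i : ℤ, (⇑(T ^ i)) ⁻¹' {x | rho T e x = (t₀:ℝ)}) = 0 :=
        haveI : NullSingletonClass μ := ⟨hμ0⟩; Set.Countable.measure_zero
          (countable_orbit_preimage (rho_fiber_subsingleton hTa' hei _)) μ
      have htend := tendsto_measure_iInter_atTop (μ := μ)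
        (fun n => (hHmeas n).nullMeasurableSet) hHanti ⟨0, measure_ne_top μ _⟩
      have hzero : μ (⋂ n, H n) = 0 :=
        le_antisymm ((measure_mono hInt).trans hμcnt.le) zero_le
      rw [hzero] at htend
      obtain ⟨n, hn⟩ := (htend.eventually_lt_const hε).exists
      set δ : ℝ := min (1/(n+1)) ((1 - (t₀:ℝ))/2) with hδ
      have hδ0 : 0 < δ := lt_min (by positivity) (by linarith)
      have hδn : δ ≤ 1/((n:ℝ)+1) := min_le_left _ _
      have hδ2 : δ ≤ (1 - (t₀:ℝ))/2 := min_le_right _ _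
      have hnb : ∀ᶠ t : Set.Icc (0:ℝ) 1 in nhds t₀, |(t:ℝ) - (t₀:ℝ)| < δ :=
        (continuous_subtype_val.tendsto t₀).eventually (eventually_abs_sub_lt _ hδ0)
      refine hnb.mono fun t htδ => ?_
      have habs := abs_lt.mp htδ
      have ht1 : (t:ℝ) < 1 := by linarith
      have htu : (t:ℝ) ≤ u := by rw [hu]; linarith
      beta_reduce
      rw [dif_pos ht1, dif_pos h1]
      refine le_trans (measure_mono ?_) hn.le
      refine (Eset_cut_cut_bound _ _ _ _ (CC_cutF hTa' hei hu1) (CC_cutB hTa' hei hu1)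
        htu ht₀u).trans (Wset_mono ?_)
      rintro x ⟨hx1, hx2⟩
      have hmin : (t₀:ℝ) - δ ≤ min (t:ℝ) (t₀:ℝ) := le_min (by linarith) (by linarith)
      have hmax : max (t:ℝ) (t₀:ℝ) ≤ (t₀:ℝ) + δ := max_le (by linarith) (by linarith)
      exact ⟨by linarith, by linarith⟩
    · -- endpoint t₀ = 1
      have ht₀1 : (t₀ : ℝ) = 1 := le_antisymm t₀.2.2 (not_lt.mp h1)
      set A : ℕ → Set X := fun n => {x | 1 - 1/((n:ℝ)+1) ≤ rho T e x} with hA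
      set G : ℕ → Set X := fun n => A n ∪ (⇑T) ⁻¹' (A n) with hG
      have hAanti : Antitone A := by
        intro m n hmn x hx
        have hfrac : 1/((n:ℝ)+1) ≤ 1/((m:ℝ)+1) := by
          apply one_div_le_one_div_of_le
          · positivity
          · exact_mod_cast Nat.succ_le_succ hmn
        show 1 - 1/((m:ℝ)+1) ≤ rho T e x
        have hx' : 1 - 1/((n:ℝ)+1) ≤ rho T e x := hx
        linarith
      have hGanti : Antitone G := fun m n hmn =>
        union_subset_union (hAanti hmn) (preimage_mono (hAanti hmn))
      have hAmeas : ∀ n, MeasurableSet (A n) := fun n =>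
        measurableSet_le measurable_const hrho
      have hGmeas : ∀ n, MeasurableSet (G n) := fun n =>
        (hAmeas n).union (hTm (hAmeas n))
      have hGempty : (⋂ n, G n) = ∅ := by
        rw [eq_empty_iff_forall_notMem]
        intro x hx
        rw [mem_iInter] at hx
        have hone : ∀ y : X, (∀ n : ℕ, 1 - 1/((n:ℝ)+1) ≤ rho T e y) → False := by
          intro y hy
          have : (1:ℝ) ≤ rho T e y := by
            by_contra hc
            push_neg at hc
            obtain ⟨n, hn⟩ := exists_nat_one_div_lt (by linarith : (0:ℝ) < 1 - rho T e y)
            have := hy n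
            linarith
          linarith [rho_lt_one (T := T) (e := e) y]
        rcases forall_or_antitone (fun n => x ∈ A n) (fun n => T x ∈ A n)
            (fun hkl h => hAanti hkl h) (fun hkl h => hAanti hkl h)
            (fun n => hx n) with hall | hall
        · exact hone x fun n => hall n
        · exact hone (T x) fun n => hall n
      have htend := tendsto_measure_iInter_atTop (μ := μ)
        (fun n => (hGmeas n).nullMeasurableSet) hGanti ⟨0, measure_ne_top μ _⟩
      rw [hGempty, measure_empty] at htend
      obtain ⟨n, hn⟩ := (htend.eventually_lt_const hε).exists
      have hδ0 : (0:ℝ) < 1/((n:ℝ)+1) := by positivity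
      have hnb : ∀ᶠ t : Set.Icc (0:ℝ) 1 in nhds t₀, |(t:ℝ) - (t₀:ℝ)| < 1/((n:ℝ)+1) :=
        (continuous_subtype_val.tendsto t₀).eventually (eventually_abs_sub_lt _ hδ0)
      refine hnb.mono fun t htδ => ?_
      have habs := abs_lt.mp htδ
      by_cases ht : (t:ℝ) < 1
      · beta_reduce
        rw [dif_pos ht, dif_neg h1]
        refine le_trans (measure_mono ?_) hn.le
        refine (Eset_cut_T_bound _ _ (by linarith : 1 - 1/((n:ℝ)+1) ≤ (t:ℝ))).trans ?_
        exact subset_rfl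
      · have hteq : t = t₀ := Subtype.ext (by
          have := le_antisymm t.2.2 (not_lt.mp ht)
          rw [this, ht₀1])
        rw [hteq]
        rw [Eset_self]
        simp
end
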